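/- arXiv:0909.1156 — 7 statements merged into one kernel-verified Lean document; each statement's English description precedes it below -/
import Mathlib

section
/- Let ψ be a nontrivial additive character of F_q and let n be a positive integer. Let Ω_n be the set of all n×n nonsingular symmetric matrices over F_q. Then ∑_{B∈Ω_n} ∑_{h∈F_q^n} ψ(hᵀBh) = q^{n(n+2)/4}·∏_{j=1}^{n/2}(q^{2j-1}-1) if n is even, and ∑_{B∈Ω_n} ∑_{h∈F_q^n} ψ(hᵀBh) = 0 if n is odd. -/
set_option linter.unusedSectionVars false
set_option linter.unnecessarySeqFocus false
set_option linter.unusedTactic false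
set_option maxHeartbeats 1000000
open Finset Matrix

section
variable {F : Type} [Field F] [Fintype F] [DecidableEq F]
variable {κ : Type} [Fintype κ] [DecidableEq κ]
variable (ψ : AddChar F ℂ)

noncomputable def SG (ι : Type) [Fintype ι] [DecidableEq ι] : ℂ :=
  ∑ B : Matrix ι ι F, if B.det ≠ 0 ∧ Bᵀ = B then ∑ h : ι → F, ψ (h ⬝ᵥ B.mulVec h) else 0

lemma sum_psi_mul (hψ : ψ ≠ 1) (t : F) :
    ∑ x : F, ψ (x * t) = if t = 0 then (Fintype.card F : ℂ) else 0 := by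
  have := AddChar.sum_mulShift t (AddChar.IsPrimitive.of_ne_one hψ)
  rw [this]; split <;> simp

lemma sum_G (hψ : ψ ≠ 1) :
    ∑ a ∈ univ.filter (fun a : F => a ≠ 0), (∑ x : F, ψ (a * x ^ 2)) = 0 := by
  have key : ∀ x : F, ∑ a ∈ univ.filter (fun a : F => a ≠ 0), ψ (a * x ^ 2)
      = (if x = 0 then (Fintype.card F : ℂ) else 0) - 1 := by
    intro x
    have h0 : (univ : Finset F) = insert 0 (univ.filter (fun a : F => a ≠ 0)) := by
      ext a; by_cases ha : a = 0 <;> simp [ha]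
    have := sum_psi_mul ψ hψ (x ^ 2)
    rw [show (∑ y : F, ψ (y * x ^ 2)) = ∑ a ∈ (univ : Finset F), ψ (a * x ^ 2) from rfl,
      h0, Finset.sum_insert (by simp)] at this
    have hx2 : (x ^ 2 = 0) ↔ x = 0 := pow_eq_zero_iff (by norm_num)
    simp only [zero_mul, AddChar.map_zero_eq_one] at this
    rw [eq_sub_iff_add_eq, add_comm, this]
    simp [hx2]
  rw [Finset.sum_comm]
  simp only [key]
  rw [Finset.sum_sub_distrib]
  simp [Finset.sum_ite_eq', Finset.card_univ]


def uof (a : F) : Matrix Unit Unit F := of fun _ _ => a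
def rof (u : κ → F) : Matrix Unit κ F := of fun _ j => u j
def cof (u : κ → F) : Matrix κ Unit F := of fun i _ => u i

def Bfull (a : F) (b c : κ → F) (C : Matrix κ κ F) : Matrix (Unit ⊕ κ) (Unit ⊕ κ) F :=
  fromBlocks (uof a) (rof b) (cof c) C

lemma uof_transpose (a : F) : (uof a)ᵀ = uof a := rfl
lemma rof_transpose (u : κ → F) : (rof u)ᵀ = cof u := rfl
lemma cof_transpose (u : κ → F) : (cof u)ᵀ = rof u := rfl

lemma Bfull_transpose (a : F) (b c : κ → F) (C : Matrix κ κ F) :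
    (Bfull a b c C)ᵀ = Bfull a c b Cᵀ := by
  rw [Bfull, fromBlocks_transpose, uof_transpose, rof_transpose, cof_transpose]; rfl

lemma Bfull_inj {a a' : F} {b b' c c' : κ → F} {C C' : Matrix κ κ F}
    (h : Bfull a b c C = Bfull a' b' c' C') : a = a' ∧ b = b' ∧ c = c' ∧ C = C' := by
  refine ⟨?_, funext fun j => ?_, funext fun i => ?_, by ext i j; exact congrFun (congrFun h (.inr i)) (.inr j)⟩
  · exact congrFun (congrFun h (.inl ())) (.inl ())
  · exact congrFun (congrFun h (.inl ())) (.inr j)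
  · exact congrFun (congrFun h (.inr i)) (.inl ())

lemma Bfull_sym_iff (a : F) (b c : κ → F) (C : Matrix κ κ F) :
    (Bfull a b c C)ᵀ = Bfull a b c C ↔ (c = b ∧ Cᵀ = C) := by
  rw [Bfull_transpose]
  constructor
  · intro h
    obtain ⟨_, h2, h3, h4⟩ := Bfull_inj h
    exact ⟨h2, h4⟩
  · rintro ⟨rfl, h⟩; rw [h]

def mEquiv : Matrix (Unit ⊕ κ) (Unit ⊕ κ) F ≃ F × (κ → F) × (κ → F) × Matrix κ κ F where
  toFun M := (M (.inl ()) (.inl ()), fun j => M (.inl ()) (.inr j), fun i => M (.inr i) (.inl ()),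
    of fun i j => M (.inr i) (.inr j))
  invFun p := Bfull p.1 p.2.1 p.2.2.1 p.2.2.2
  left_inv M := by
    ext i j
    cases i <;> cases j <;> simp [Bfull, uof, rof, cof, fromBlocks]
  right_inv p := by
    obtain ⟨a, b, c, C⟩ := p
    simp only [Bfull, uof, rof, cof, fromBlocks]
    refine Prod.ext ?_ (Prod.ext ?_ (Prod.ext ?_ ?_)) <;> rfl

lemma sum_matrix_blocks (f : Matrix (Unit ⊕ κ) (Unit ⊕ κ) F → ℂ) :
    ∑ M, f M = ∑ a : F, ∑ b : κ → F, ∑ c : κ → F, ∑ C : Matrix κ κ F, f (Bfull a b c C) := by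
  calc ∑ M, f M = ∑ p : F × ((κ → F) × ((κ → F) × Matrix κ κ F)), f (mEquiv.symm p) :=
        (Equiv.sum_comp mEquiv.symm f).symm
    _ = _ := by
        simp only [Fintype.sum_prod_type]; rfl

def vEquiv : ((Unit ⊕ κ) → F) ≃ F × (κ → F) where
  toFun h := (h (.inl ()), fun j => h (.inr j))
  invFun p := Sum.elim (fun _ => p.1) p.2
  left_inv h := funext fun i => by cases i with
    | inl u => cases u; rfl
    | inr j => rfl
  right_inv p := rfl

lemma sum_vec_blocks (f : ((Unit ⊕ κ) → F) → ℂ) :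
    ∑ h, f h = ∑ x : F, ∑ y : κ → F, f (Sum.elim (fun _ => x) y) := by
  calc ∑ h, f h = ∑ p : F × (κ → F), f (vEquiv.symm p) := (Equiv.sum_comp vEquiv.symm f).symm
    _ = _ := by simp only [Fintype.sum_prod_type]; rfl

lemma quad_expand (a : F) (b c : κ → F) (C : Matrix κ κ F) (x : F) (y : κ → F) :
    (Sum.elim (fun _ : Unit => x) y) ⬝ᵥ (Bfull a b c C) *ᵥ (Sum.elim (fun _ : Unit => x) y)
      = a * x ^ 2 + x * (b ⬝ᵥ y) + (c ⬝ᵥ y) * x + y ⬝ᵥ C *ᵥ y := by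
  rw [Bfull, fromBlocks_mulVec, sumElim_dotProduct_sumElim]
  simp only [dotProduct_add, Sum.elim_comp_inl, Sum.elim_comp_inr]
  have h1 : (fun _ : Unit => x) ⬝ᵥ (uof a *ᵥ fun _ : Unit => x) = a * x ^ 2 := by
    simp [dotProduct, uof, mulVec]; ring
  have h2 : (fun _ : Unit => x) ⬝ᵥ (rof b *ᵥ y) = x * (b ⬝ᵥ y) := by
    simp [dotProduct, rof, mulVec]
  have h3 : y ⬝ᵥ (cof c *ᵥ fun _ : Unit => x) = (c ⬝ᵥ y) * x := by
    simp [dotProduct, cof, mulVec, Finset.sum_mul]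
    exact Finset.sum_congr rfl fun i _ => by ring
  rw [h1, h2, h3]
  ring


lemma uof_mul_uof (a b : F) : uof a * uof b = uof (a * b) := by
  ext _ _; simp [uof, mul_apply]

lemma uof_one : (uof 1 : Matrix Unit Unit F) = 1 := by
  ext ⟨⟩ ⟨⟩; simp [uof]

lemma uof_zero : (uof 0 : Matrix Unit Unit F) = 0 := by
  ext _ _; simp [uof]

lemma cof_mul_uof (u : κ → F) (a : F) : cof u * uof a = cof (fun i => u i * a) := by
  ext i j; simp [cof, uof, mul_apply]

lemma uof_mul_rof (a : F) (u : κ → F) : uof a * rof u = rof (fun j => a * u j) := by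
  ext i j; simp [uof, rof, mul_apply]

lemma cof_mul_rof (u v : κ → F) : cof u * rof v = vecMulVec u v := by
  ext i j; simp [cof, rof, mul_apply, vecMulVec]

lemma rof_mul_cof (u v : κ → F) : rof u * cof v = uof (u ⬝ᵥ v) := by
  ext i j; simp [rof, cof, mul_apply, dotProduct, uof]

lemma rof_mul (u : κ → F) (M : Matrix κ κ F) : rof u * M = rof (vecMul u M) := by
  ext i j; simp [rof, mul_apply, vecMul, dotProduct]

lemma mul_cof (M : Matrix κ κ F) (u : κ → F) : M * cof u = cof (M *ᵥ u) := by
  ext i j; simp [cof, mul_apply, mulVec, dotProduct]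

lemma vecMulVec_transpose' (u v : κ → F) : (vecMulVec u v)ᵀ = vecMulVec v u := by
  ext i j; simp [vecMulVec, mul_comm]

-- determinant lemmas
lemma det_Bfull_zero (C : Matrix κ κ F) : (Bfull (0:F) 0 0 C).det = 0 := by
  apply det_eq_zero_of_row_eq_zero (Sum.inl ())
  rintro (j | j) <;> rfl

lemma det_Bfull_ne {a : F} (ha : a ≠ 0) (b : κ → F) (C : Matrix κ κ F) :
    (Bfull a b b C).det = a * (C - a⁻¹ • vecMulVec b b).det := by
  letI : Invertible (uof a : Matrix Unit Unit F) :=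
    ⟨uof a⁻¹, by rw [uof_mul_uof, inv_mul_cancel₀ ha, uof_one],
      by rw [uof_mul_uof, mul_inv_cancel₀ ha, uof_one]⟩
  rw [Bfull, det_fromBlocks₁₁]
  congr 1
  · simp [uof, det_unique]
  · congr 1
    have : (⅟(uof a) : Matrix Unit Unit F) = uof a⁻¹ := rfl
    rw [this, cof_mul_uof, cof_mul_rof]
    ext i j; simp [vecMulVec]; ring

-- conjugation
lemma conj_Bfull0 (g : Matrix κ κ F) (v : κ → F) (C : Matrix κ κ F) :
    (fromBlocks 1 0 0 g)ᵀ * (Bfull 0 v v C) * (fromBlocks 1 0 0 g)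
      = Bfull 0 (vecMul v g) (vecMul v g) (gᵀ * C * g) := by
  rw [fromBlocks_transpose, transpose_one, transpose_zero, Bfull, fromBlocks_multiply,
    fromBlocks_multiply]
  rw [Bfull]
  congr 1 <;>
    simp [Matrix.mul_zero, Matrix.zero_mul, Matrix.one_mul, Matrix.mul_one, rof_mul, mul_cof,
      vecMul_transpose, mulVec_transpose, Matrix.mul_assoc]

lemma det_P (g : Matrix κ κ F) : (fromBlocks (1 : Matrix Unit Unit F) 0 0 g).det = g.det := by
  rw [det_fromBlocks_zero₂₁, det_one, one_mul]

noncomputable def conjEquiv (g : Matrix κ κ F) (hg : IsUnit g.det) :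
    Matrix κ κ F ≃ Matrix κ κ F where
  toFun C := gᵀ * C * g
  invFun C := gᵀ⁻¹ * C * g⁻¹
  left_inv C := by
    have hgT : IsUnit (gᵀ).det := by rwa [det_transpose]
    show gᵀ⁻¹ * (gᵀ * C * g) * g⁻¹ = C
    rw [Matrix.mul_assoc gᵀ C g, Matrix.nonsing_inv_mul_cancel_left _ _ hgT,
      Matrix.mul_nonsing_inv_cancel_right _ _ hg]
  right_inv C := by
    have hgT : IsUnit (gᵀ).det := by rwa [det_transpose]
    show gᵀ * (gᵀ⁻¹ * C * g⁻¹) * g = C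
    rw [Matrix.mul_assoc gᵀ⁻¹ C g⁻¹, Matrix.mul_nonsing_inv_cancel_left _ _ hgT,
      Matrix.nonsing_inv_mul_cancel_right _ _ hg]

noncomputable def mulVecEquiv (g : Matrix κ κ F) (hg : IsUnit g.det) : (κ → F) ≃ (κ → F) where
  toFun y := g *ᵥ y
  invFun y := g⁻¹ *ᵥ y
  left_inv y := by
    show g⁻¹ *ᵥ (g *ᵥ y) = y
    rw [mulVec_mulVec, Matrix.nonsing_inv_mul _ hg, one_mulVec]
  right_inv y := by
    show g *ᵥ (g⁻¹ *ᵥ y) = y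
    rw [mulVec_mulVec, Matrix.mul_nonsing_inv _ hg, one_mulVec]

lemma exists_unit_vecMul {v : κ → F} (hv : v ≠ 0) (k₀ : κ) :
    ∃ g : Matrix κ κ F, IsUnit g.det ∧ vecMul v g = Pi.single k₀ 1 := by
  obtain ⟨i₀, hi₀⟩ : ∃ i, v i ≠ 0 := by
    by_contra h; push_neg at h; exact hv (funext h)
  set M : Matrix κ κ F := (1 : Matrix κ κ F).updateRow i₀ v with hM
  have hdetM : M.det = v i₀ := by
    have hv' : v = ∑ k, v k • (1 : Matrix κ κ F) k := by
      funext j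
      simp [Matrix.one_apply, Pi.single_apply, Finset.sum_ite_eq]
    rw [hM, hv', det_updateRow_sum]
    simp [Matrix.one_apply, mul_ite, mul_one, mul_zero, Finset.sum_ite_eq']
  have hMunit : IsUnit M.det := by rw [hdetM]; exact isUnit_iff_ne_zero.mpr hi₀
  have hrow : vecMul (Pi.single i₀ (1:F)) M = v := by
    funext j
    simp [vecMul, dotProduct, Pi.single_apply, ite_mul, Finset.sum_ite_eq]
    simp [hM]
  set σ : Equiv.Perm κ := Equiv.swap i₀ k₀
  set P : Matrix κ κ F := (1 : Matrix κ κ F).submatrix σ id with hP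
  have hdetP : IsUnit P.det := by
    have : P.det = Equiv.Perm.sign σ * (1 : Matrix κ κ F).det := det_permute σ 1
    rw [det_one, mul_one] at this
    rw [this]
    rcases Int.units_eq_one_or (Equiv.Perm.sign σ) with h | h <;> rw [h] <;> simp
  refine ⟨M⁻¹ * P, ?_, ?_⟩
  · rw [det_mul]
    exact ((Matrix.isUnit_nonsing_inv_det M hMunit).mul hdetP)
  · have h1 : v ᵥ* (M⁻¹ * P) = (v ᵥ* M⁻¹) ᵥ* P := (vecMul_vecMul _ _ _).symm
    have h2 : v ᵥ* M⁻¹ = Pi.single i₀ 1 := by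
      rw [← hrow, vecMul_vecMul, Matrix.mul_nonsing_inv _ hMunit, vecMul_one]
    rw [h1, h2]
    funext j
    simp only [vecMul, dotProduct, Pi.single_apply, ite_mul, one_mul, zero_mul,
      Finset.sum_ite_eq, Finset.mem_univ, if_true, hP, submatrix_apply, id_eq,
      Matrix.one_apply]
    rcases eq_or_ne j k₀ with rfl | hj
    · simp [σ, Equiv.swap_apply_left]
    · have : σ i₀ ≠ j := by simp [σ, Equiv.swap_apply_left]; exact fun h => hj h.symm
      simp [this, hj]


lemma quad_shift (a : F) (b y : κ → F) (D : Matrix κ κ F) :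
    y ⬝ᵥ (D + a⁻¹ • vecMulVec b b) *ᵥ y
      = y ⬝ᵥ D *ᵥ y + a⁻¹ * ((b ⬝ᵥ y) * (b ⬝ᵥ y)) := by
  rw [add_mulVec, dotProduct_add, smul_mulVec, dotProduct_smul, smul_eq_mul]
  congr 2
  have : vecMulVec b b *ᵥ y = (b ⬝ᵥ y) • b := by
    funext i
    simp only [vecMulVec, mulVec, dotProduct, of_apply, Pi.smul_apply, smul_eq_mul]
    rw [Finset.sum_mul]
    exact Finset.sum_congr rfl fun x _ => by ring
  rw [this, dotProduct_smul, smul_eq_mul, dotProduct_comm]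

noncomputable def fV (v : κ → F) : ℂ :=
  ∑ C : Matrix κ κ F, if (Bfull 0 v v C).det ≠ 0 ∧ Cᵀ = C then
    (∑ y : κ → F, if v ⬝ᵥ y = 0 then ψ (y ⬝ᵥ C *ᵥ y) else 0) else 0

lemma fV_zero : fV ψ (0 : κ → F) = 0 := by
  refine Finset.sum_eq_zero fun C _ => ?_
  rw [if_neg]
  rintro ⟨hdet, -⟩
  exact hdet (det_Bfull_zero C)

lemma fV_eq {v : κ → F} (hv : v ≠ 0) (k₀ : κ) : fV ψ v = fV ψ (Pi.single k₀ 1) := by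
  obtain ⟨g, hg, hvg⟩ := exists_unit_vecMul hv k₀
  have hgne : g.det ≠ 0 := hg.ne_zero
  have key : ∀ C : Matrix κ κ F,
      (if (Bfull 0 v v C).det ≠ 0 ∧ Cᵀ = C then
        (∑ y : κ → F, if v ⬝ᵥ y = 0 then ψ (y ⬝ᵥ C *ᵥ y) else 0) else 0)
      = (if (Bfull 0 (Pi.single k₀ 1) (Pi.single k₀ 1) (conjEquiv g hg C)).det ≠ 0 ∧
            (conjEquiv g hg C)ᵀ = conjEquiv g hg C then
        (∑ y : κ → F, if Pi.single k₀ 1 ⬝ᵥ y = 0 then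
          ψ (y ⬝ᵥ (conjEquiv g hg C) *ᵥ y) else 0) else 0) := by
    intro C
    have hcc : conjEquiv g hg C = gᵀ * C * g := rfl
    have hBconj : Bfull 0 (Pi.single k₀ 1) (Pi.single k₀ 1) (gᵀ * C * g)
        = (fromBlocks 1 0 0 g)ᵀ * (Bfull 0 v v C) * (fromBlocks 1 0 0 g) := by
      rw [conj_Bfull0, hvg]
    have hdet_iff : ((Bfull 0 (Pi.single k₀ 1) (Pi.single k₀ 1) (conjEquiv g hg C)).det ≠ 0)
        ↔ (Bfull 0 v v C).det ≠ 0 := by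
      rw [hcc, hBconj, det_mul, det_mul, det_transpose, det_P]
      simp [mul_ne_zero_iff, hgne]
    have hsym_iff : ((conjEquiv g hg C)ᵀ = conjEquiv g hg C) ↔ Cᵀ = C := by
      simp only [hcc]
      constructor
      · intro h
        have h' : conjEquiv g hg Cᵀ = conjEquiv g hg C := by
          rw [hcc]
          calc gᵀ * Cᵀ * g = (gᵀ * C * g)ᵀ := by
                rw [transpose_mul, transpose_mul, transpose_transpose, Matrix.mul_assoc]
            _ = gᵀ * C * g := h
        exact (conjEquiv g hg).injective h'
      · intro h
        rw [transpose_mul, transpose_mul, transpose_transpose, h, Matrix.mul_assoc]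
    have hinner : (∑ y : κ → F, if v ⬝ᵥ y = 0 then ψ (y ⬝ᵥ C *ᵥ y) else 0)
        = ∑ y : κ → F, if Pi.single k₀ 1 ⬝ᵥ y = 0 then ψ (y ⬝ᵥ (conjEquiv g hg C) *ᵥ y) else 0 := by
      rw [← Equiv.sum_comp (mulVecEquiv g hg)
        (fun y => if v ⬝ᵥ y = 0 then ψ (y ⬝ᵥ C *ᵥ y) else 0)]
      refine Finset.sum_congr rfl fun y _ => ?_
      have hmv : mulVecEquiv g hg y = g *ᵥ y := rfl
      have h1 : v ⬝ᵥ (g *ᵥ y) = Pi.single k₀ 1 ⬝ᵥ y := by rw [dotProduct_mulVec, hvg]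
      have h2 : (g *ᵥ y) ⬝ᵥ C *ᵥ (g *ᵥ y) = y ⬝ᵥ (gᵀ * C * g) *ᵥ y := by
        rw [← mulVec_mulVec, ← mulVec_mulVec, dotProduct_mulVec y gᵀ, vecMul_transpose,
          mulVec_mulVec]
      rw [hmv, h1, h2, hcc]
    exact (if_congr (and_congr hdet_iff hsym_iff) hinner.symm rfl).symm
  rw [fV, fV]
  calc ∑ C : Matrix κ κ F, _ = ∑ C : Matrix κ κ F,
      (if (Bfull 0 (Pi.single k₀ 1) (Pi.single k₀ 1) (conjEquiv g hg C)).det ≠ 0 ∧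
            (conjEquiv g hg C)ᵀ = conjEquiv g hg C then
        (∑ y : κ → F, if Pi.single k₀ 1 ⬝ᵥ y = 0 then
          ψ (y ⬝ᵥ (conjEquiv g hg C) *ᵥ y) else 0) else 0) := Finset.sum_congr rfl fun C _ => key C
    _ = _ := Equiv.sum_comp (conjEquiv g hg) (fun C => if
        (Bfull 0 (Pi.single k₀ 1) (Pi.single k₀ 1) C).det ≠ 0 ∧ Cᵀ = C then
        (∑ y : κ → F, if Pi.single k₀ 1 ⬝ᵥ y = 0 then ψ (y ⬝ᵥ C *ᵥ y) else 0) else 0)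
lemma A1 (hψ : ψ ≠ 1) (h2 : (2:F) ≠ 0) :
    SG (F := F) ψ (Unit ⊕ κ) = (Fintype.card F : ℂ) * ∑ v : κ → F, fV ψ v := by
  have step1 : ∀ (a : F) (b : κ → F),
      (∑ c : κ → F, ∑ C : Matrix κ κ F,
        (if (Bfull a b c C).det ≠ 0 ∧ (Bfull a b c C)ᵀ = Bfull a b c C then
          ∑ h : Unit ⊕ κ → F, ψ (h ⬝ᵥ Bfull a b c C *ᵥ h) else 0))
      = ∑ C : Matrix κ κ F, (if (Bfull a b b C).det ≠ 0 ∧ Cᵀ = C then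
          ∑ x : F, ∑ y : κ → F,
            ψ (a * x ^ 2 + x * (b ⬝ᵥ y) + (b ⬝ᵥ y) * x + y ⬝ᵥ C *ᵥ y) else 0) := by
    intro a b
    rw [Finset.sum_comm]
    refine Finset.sum_congr rfl fun C _ => ?_
    rw [Finset.sum_eq_single b]
    · refine if_congr ?_ ?_ rfl
      · rw [Bfull_sym_iff]; simp
      · rw [sum_vec_blocks (f := fun h => ψ (h ⬝ᵥ Bfull a b b C *ᵥ h))]
        exact Finset.sum_congr rfl fun x _ => Finset.sum_congr rfl fun y _ =>
          congrArg ψ (quad_expand a b b C x y)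
    · intro c _ hc
      rw [if_neg]
      rintro ⟨-, hsym⟩
      exact hc ((Bfull_sym_iff a b c C).mp hsym).1
    · intro hb; exact absurd (Finset.mem_univ b) hb
  have e1 : SG (F := F) ψ (Unit ⊕ κ) = ∑ a : F, ∑ b : κ → F,
      ∑ C : Matrix κ κ F, (if (Bfull a b b C).det ≠ 0 ∧ Cᵀ = C then
        ∑ x : F, ∑ y : κ → F,
          ψ (a * x ^ 2 + x * (b ⬝ᵥ y) + (b ⬝ᵥ y) * x + y ⬝ᵥ C *ᵥ y) else 0) := by
    rw [SG, sum_matrix_blocks]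
    exact Finset.sum_congr rfl fun a _ => Finset.sum_congr rfl fun b _ => step1 a b
  have split := Finset.add_sum_erase (univ : Finset F) (fun a : F => ∑ b : κ → F,
      ∑ C : Matrix κ κ F, (if (Bfull a b b C).det ≠ 0 ∧ Cᵀ = C then
        ∑ x : F, ∑ y : κ → F,
          ψ (a * x ^ 2 + x * (b ⬝ᵥ y) + (b ⬝ᵥ y) * x + y ⬝ᵥ C *ᵥ y) else 0))
    (Finset.mem_univ 0)
  rw [e1, ← split, show (univ.erase (0:F)) = univ.filter (fun a : F => a ≠ 0) from
    (Finset.filter_ne' univ 0).symm]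
  have hterm : ∀ a : F, a ≠ 0 → (∑ b : κ → F,
      ∑ C : Matrix κ κ F, (if (Bfull a b b C).det ≠ 0 ∧ Cᵀ = C then
        ∑ x : F, ∑ y : κ → F,
          ψ (a * x ^ 2 + x * (b ⬝ᵥ y) + (b ⬝ᵥ y) * x + y ⬝ᵥ C *ᵥ y) else 0))
      = (∑ x : F, ψ (a * x ^ 2)) * (∑ b : κ → F, ∑ D : Matrix κ κ F,
          (if D.det ≠ 0 ∧ Dᵀ = D then ∑ y : κ → F, ψ (y ⬝ᵥ D *ᵥ y) else 0)) := by
    intro a ha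
    rw [Finset.mul_sum]
    refine Finset.sum_congr rfl fun b _ => ?_
    rw [Finset.mul_sum]
    rw [← Equiv.sum_comp (Equiv.addRight (a⁻¹ • vecMulVec b b)) (fun C =>
      if (Bfull a b b C).det ≠ 0 ∧ Cᵀ = C then
        ∑ x : F, ∑ y : κ → F,
          ψ (a * x ^ 2 + x * (b ⬝ᵥ y) + (b ⬝ᵥ y) * x + y ⬝ᵥ C *ᵥ y) else 0)]
    refine Finset.sum_congr rfl fun D _ => ?_
    have hD : (Equiv.addRight (a⁻¹ • vecMulVec b b)) D = D + a⁻¹ • vecMulVec b b := rfl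
    rw [hD]
    have hcond : ((Bfull a b b (D + a⁻¹ • vecMulVec b b)).det ≠ 0 ∧
        (D + a⁻¹ • vecMulVec b b)ᵀ = D + a⁻¹ • vecMulVec b b) ↔ (D.det ≠ 0 ∧ Dᵀ = D) := by
      have hs : (a⁻¹ • vecMulVec b b)ᵀ = a⁻¹ • vecMulVec b b := by
        rw [transpose_smul, vecMulVec_transpose']
      rw [det_Bfull_ne ha, add_sub_cancel_right, transpose_add, hs, add_left_inj,
        mul_ne_zero_iff]
      simp [ha]
    have hinner : (∑ x : F, ∑ y : κ → F,
        ψ (a * x ^ 2 + x * (b ⬝ᵥ y) + (b ⬝ᵥ y) * x + y ⬝ᵥ (D + a⁻¹ • vecMulVec b b) *ᵥ y))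
        = (∑ x : F, ψ (a * x ^ 2)) * ∑ y : κ → F, ψ (y ⬝ᵥ D *ᵥ y) := by
      rw [Finset.sum_comm, Finset.mul_sum]
      refine Finset.sum_congr rfl fun y _ => ?_
      have harg : ∀ x : F,
          a * x ^ 2 + x * (b ⬝ᵥ y) + (b ⬝ᵥ y) * x + y ⬝ᵥ (D + a⁻¹ • vecMulVec b b) *ᵥ y
          = a * (x + a⁻¹ * (b ⬝ᵥ y)) ^ 2 + y ⬝ᵥ D *ᵥ y := by
        intro x
        rw [quad_shift]
        field_simp
        ring
      calc ∑ x : F, ψ (a * x ^ 2 + x * (b ⬝ᵥ y) + (b ⬝ᵥ y) * x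
              + y ⬝ᵥ (D + a⁻¹ • vecMulVec b b) *ᵥ y)
          = ∑ x : F, ψ (a * (x + a⁻¹ * (b ⬝ᵥ y)) ^ 2 + y ⬝ᵥ D *ᵥ y) :=
            Finset.sum_congr rfl fun x _ => congrArg ψ (harg x)
        _ = ∑ x : F, ψ (a * x ^ 2 + y ⬝ᵥ D *ᵥ y) :=
            Fintype.sum_equiv (Equiv.addRight (a⁻¹ * (b ⬝ᵥ y))) _ _ fun x => rfl
        _ = ∑ x : F, ψ (a * x ^ 2) * ψ (y ⬝ᵥ D *ᵥ y) :=
            Finset.sum_congr rfl fun x _ => AddChar.map_add_eq_mul ψ _ _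
        _ = (∑ x : F, ψ (a * x ^ 2)) * ψ (y ⬝ᵥ D *ᵥ y) := by rw [Finset.sum_mul]
    rw [if_congr hcond hinner rfl, mul_ite, mul_zero]
  have hzero : ∑ a ∈ univ.filter (fun a : F => a ≠ 0), (∑ b : κ → F,
      ∑ C : Matrix κ κ F, (if (Bfull a b b C).det ≠ 0 ∧ Cᵀ = C then
        ∑ x : F, ∑ y : κ → F,
          ψ (a * x ^ 2 + x * (b ⬝ᵥ y) + (b ⬝ᵥ y) * x + y ⬝ᵥ C *ᵥ y) else 0)) = 0 := by
    have := Finset.sum_congr rfl (fun (a : F) (ha : a ∈ univ.filter (fun a : F => a ≠ 0)) =>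
      hterm a ((Finset.mem_filter.mp ha).2))
    rw [this, ← Finset.sum_mul, sum_G ψ hψ, zero_mul]
  rw [hzero, add_zero]
  -- the a = 0 term
  rw [Finset.mul_sum]
  refine Finset.sum_congr rfl fun b _ => ?_
  rw [fV, Finset.mul_sum]
  refine Finset.sum_congr rfl fun C _ => ?_
  rw [mul_ite, mul_zero]
  refine if_congr Iff.rfl ?_ rfl
  rw [Finset.sum_comm, Finset.mul_sum]
  refine Finset.sum_congr rfl fun y _ => ?_
  have harg : ∀ x : F, 0 * x ^ 2 + x * (b ⬝ᵥ y) + (b ⬝ᵥ y) * x + y ⬝ᵥ C *ᵥ y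
      = x * (2 * (b ⬝ᵥ y)) + y ⬝ᵥ C *ᵥ y := by intro x; ring
  calc ∑ x : F, ψ (0 * x ^ 2 + x * (b ⬝ᵥ y) + (b ⬝ᵥ y) * x + y ⬝ᵥ C *ᵥ y)
      = ∑ x : F, ψ (x * (2 * (b ⬝ᵥ y))) * ψ (y ⬝ᵥ C *ᵥ y) :=
        Finset.sum_congr rfl fun x _ => by rw [harg x]; exact AddChar.map_add_eq_mul ψ _ _
    _ = (∑ x : F, ψ (x * (2 * (b ⬝ᵥ y)))) * ψ (y ⬝ᵥ C *ᵥ y) := by rw [Finset.sum_mul]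
    _ = (if 2 * (b ⬝ᵥ y) = 0 then (Fintype.card F : ℂ) else 0) * ψ (y ⬝ᵥ C *ᵥ y) := by
        rw [sum_psi_mul ψ hψ]
    _ = (Fintype.card F : ℂ) * (if b ⬝ᵥ y = 0 then ψ (y ⬝ᵥ C *ᵥ y) else 0) := by
        by_cases hby : b ⬝ᵥ y = 0 <;> simp [hby, h2]
lemma uof_add (a b : F) : (uof a + uof b : Matrix Unit Unit F) = uof (a + b) := by
  ext _ _; simp [uof]

lemma lemA (hψ : ψ ≠ 1) (h2 : (2:F) ≠ 0) (k₀ : κ) :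
    SG (F := F) ψ (Unit ⊕ κ) = (Fintype.card F : ℂ) *
      (((Fintype.card F : ℂ) ^ (Fintype.card κ) - 1) * fV ψ (Pi.single k₀ 1)) := by
  rw [A1 ψ hψ h2]
  congr 1
  have h1 : ∀ v : κ → F, fV ψ v
      = fV ψ (Pi.single k₀ 1) - (if v = 0 then fV ψ (Pi.single k₀ 1) else 0) := by
    intro v
    rcases eq_or_ne v 0 with rfl | hv
    · simp [fV_zero]
    · simp [hv, fV_eq ψ hv k₀]
  rw [Finset.sum_congr rfl fun v _ => h1 v, Finset.sum_sub_distrib, Finset.sum_const,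
    Finset.sum_ite_eq' univ (0 : κ → F), if_pos (Finset.mem_univ _), Finset.card_univ]
  rw [Fintype.card_fun]
  rw [sub_mul, one_mul, ← Nat.cast_pow, nsmul_eq_mul]

section partB2
variable {ι : Type} [Fintype ι] [DecidableEq ι]

lemma det3 (c : F) (u : ι → F) (C' : Matrix ι ι F) :
    (Bfull 0 (Pi.single (Sum.inl ()) 1) (Pi.single (Sum.inl ()) 1) (Bfull c u u C')).det ≠ 0
      ↔ C'.det ≠ 0 := by
  set A : Matrix (Unit ⊕ Unit) (Unit ⊕ Unit) F := fromBlocks (uof 0) (uof 1) (uof 1) (uof c)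
    with hA
  set Ai : Matrix (Unit ⊕ Unit) (Unit ⊕ Unit) F := fromBlocks (uof (-c)) (uof 1) (uof 1) (uof 0)
    with hAi
  set X : Matrix (Unit ⊕ Unit) ι F := of fun p j => Sum.elim (fun _ => (0:F)) (fun _ => u j) p
    with hX
  set Y : Matrix ι (Unit ⊕ Unit) F := of fun i p => Sum.elim (fun _ => (0:F)) (fun _ => u i) p
    with hY
  have hM : (Bfull 0 (Pi.single (Sum.inl ()) 1) (Pi.single (Sum.inl ()) 1)
        (Bfull c u u C')).submatrix (Equiv.sumAssoc Unit Unit ι) (Equiv.sumAssoc Unit Unit ι)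
      = fromBlocks A X Y C' := by
    ext i j
    rcases i with (i1 | i1) | i2 <;> rcases j with (j1 | j1) | j2 <;>
      simp [hA, hX, hY, Bfull, uof, rof, cof, fromBlocks, Equiv.sumAssoc, Pi.single_apply]
  letI : Invertible A := ⟨Ai, by
      rw [hA, hAi, fromBlocks_multiply]
      simp only [uof_mul_uof, uof_add]
      rw [show (-c) * 0 + 1 * 1 = (1:F) by ring, show (-c) * 1 + 1 * c = (0:F) by ring,
        show (1:F) * 0 + 0 * 1 = (0:F) by ring, show (1:F) * 1 + 0 * c = (1:F) by ring,
        uof_one, uof_zero, fromBlocks_one],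
    by
      rw [hA, hAi, fromBlocks_multiply]
      simp only [uof_mul_uof, uof_add]
      rw [show (0:F) * (-c) + 1 * 1 = (1:F) by ring, show (0:F) * 1 + 1 * 0 = (0:F) by ring,
        show (1:F) * (-c) + c * 1 = (0:F) by ring, show (1:F) * 1 + c * 0 = (1:F) by ring,
        uof_one, uof_zero, fromBlocks_one]⟩
  have hYX : Y * Ai * X = 0 := by
    ext i j
    simp [hY, hAi, hX, mul_apply, Fintype.sum_sum_type, fromBlocks, uof]
  have hdet : (Bfull 0 (Pi.single (Sum.inl ()) 1) (Pi.single (Sum.inl ()) 1)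
      (Bfull c u u C')).det = A.det * C'.det := by
    rw [← det_submatrix_equiv_self (Equiv.sumAssoc Unit Unit ι), hM, det_fromBlocks₁₁]
    congr 1
    have hinv : (⅟A : Matrix (Unit ⊕ Unit) (Unit ⊕ Unit) F) = Ai := rfl
    rw [hinv, hYX, sub_zero]
  have hAdet : A.det ≠ 0 := IsUnit.ne_zero (Matrix.isUnit_det_of_invertible A)
  rw [hdet, mul_ne_zero_iff]
  simp [hAdet]

lemma ysum (c : F) (u : ι → F) (C' : Matrix ι ι F) :
    (∑ y : (Unit ⊕ ι) → F, if (Pi.single (Sum.inl ()) 1 : Unit ⊕ ι → F) ⬝ᵥ y = 0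
      then ψ (y ⬝ᵥ (Bfull c u u C') *ᵥ y) else 0)
    = ∑ z : ι → F, ψ (z ⬝ᵥ C' *ᵥ z) := by
  rw [sum_vec_blocks (f := fun y => if (Pi.single (Sum.inl ()) 1 : Unit ⊕ ι → F) ⬝ᵥ y = 0
      then ψ (y ⬝ᵥ (Bfull c u u C') *ᵥ y) else 0)]
  have hdot : ∀ (x : F) (z : ι → F),
      (Pi.single (Sum.inl ()) 1 : Unit ⊕ ι → F) ⬝ᵥ (Sum.elim (fun _ => x) z) = x := by
    intro x z
    simp [dotProduct, Fintype.sum_sum_type, Pi.single_apply]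
  have hz : ∀ x : F, (∑ z : ι → F, if (Pi.single (Sum.inl ()) 1 : Unit ⊕ ι → F) ⬝ᵥ
        (Sum.elim (fun _ : Unit => x) z) = 0
      then ψ ((Sum.elim (fun _ : Unit => x) z) ⬝ᵥ (Bfull c u u C') *ᵥ
        (Sum.elim (fun _ : Unit => x) z)) else 0)
      = if x = 0 then ∑ z : ι → F, ψ ((Sum.elim (fun _ : Unit => x) z) ⬝ᵥ (Bfull c u u C') *ᵥ
        (Sum.elim (fun _ : Unit => x) z)) else 0 := by
    intro x
    by_cases hx : x = 0 <;> simp [hdot, hx]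
  rw [Finset.sum_congr rfl fun x _ => hz x, Finset.sum_ite_eq' univ (0:F),
    if_pos (Finset.mem_univ _)]
  refine Finset.sum_congr rfl fun z _ => congrArg ψ ?_
  rw [quad_expand]
  ring

end partB2
section partB3
variable {ι : Type} [Fintype ι] [DecidableEq ι]

lemma lemB :
    fV (κ := Unit ⊕ ι) ψ (Pi.single (Sum.inl ()) 1)
      = (Fintype.card F : ℂ) * ((Fintype.card F : ℂ) ^ (Fintype.card ι)) * SG (F := F) ψ ι := by
  rw [fV, sum_matrix_blocks (f := fun C => if (Bfull 0 (Pi.single (Sum.inl ()) 1)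
      (Pi.single (Sum.inl ()) 1) C).det ≠ 0 ∧ Cᵀ = C then
    (∑ y : (Unit ⊕ ι) → F, if (Pi.single (Sum.inl ()) 1 : Unit ⊕ ι → F) ⬝ᵥ y = 0
      then ψ (y ⬝ᵥ C *ᵥ y) else 0) else 0)]
  have step : ∀ (c : F) (un : ι → F),
      (∑ u' : ι → F, ∑ C' : Matrix ι ι F,
        (if (Bfull 0 (Pi.single (Sum.inl ()) 1) (Pi.single (Sum.inl ()) 1)
            (Bfull c un u' C')).det ≠ 0 ∧ (Bfull c un u' C')ᵀ = Bfull c un u' C' then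
          (∑ y : (Unit ⊕ ι) → F, if (Pi.single (Sum.inl ()) 1 : Unit ⊕ ι → F) ⬝ᵥ y = 0
            then ψ (y ⬝ᵥ (Bfull c un u' C') *ᵥ y) else 0) else 0))
      = SG (F := F) ψ ι := by
    intro c un
    rw [Finset.sum_comm, SG]
    refine Finset.sum_congr rfl fun C' _ => ?_
    rw [Finset.sum_eq_single un]
    · refine if_congr ?_ (ysum ψ c un C') rfl
      rw [Bfull_sym_iff]
      constructor
      · rintro ⟨hd, -, hs⟩; exact ⟨(det3 c un C').mp hd, hs⟩
      · rintro ⟨hd, hs⟩; exact ⟨(det3 c un C').mpr hd, rfl, hs⟩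
    · intro u' _ hu; rw [if_neg]; rintro ⟨-, hsym⟩
      exact hu ((Bfull_sym_iff c un u' C').mp hsym).1
    · intro h; exact absurd (Finset.mem_univ un) h
  rw [Finset.sum_congr rfl fun c (_ : c ∈ univ) => Finset.sum_congr rfl
    fun un (_ : un ∈ univ) => step c un]
  rw [Finset.sum_const, Finset.sum_const, Finset.card_univ, Finset.card_univ, Fintype.card_fun]
  rw [smul_smul, nsmul_eq_mul]
  push_cast
  ring

end partB3

lemma SG_reindex {ι κ' : Type} [Fintype ι] [DecidableEq ι] [Fintype κ'] [DecidableEq κ']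
    (e : ι ≃ κ') : SG (F := F) ψ κ' = SG (F := F) ψ ι := by
  rw [SG, SG, ← Equiv.sum_comp (Matrix.reindex e e) (fun B : Matrix κ' κ' F =>
    if B.det ≠ 0 ∧ Bᵀ = B then ∑ h : κ' → F, ψ (h ⬝ᵥ B *ᵥ h) else 0)]
  refine Finset.sum_congr rfl fun A _ => ?_
  refine if_congr ?_ ?_ rfl
  · rw [det_reindex_self]
    have : (Matrix.reindex e e A)ᵀ = Matrix.reindex e e Aᵀ := (transpose_reindex e e A).symm
    rw [this, (Matrix.reindex e e).injective.eq_iff]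
  · rw [← Equiv.sum_comp (Equiv.arrowCongr e (Equiv.refl F)) (fun h : κ' → F =>
      ψ (h ⬝ᵥ (Matrix.reindex e e A) *ᵥ h))]
    refine Finset.sum_congr rfl fun h' _ => congrArg ψ ?_
    have h1 : (Equiv.arrowCongr e (Equiv.refl F)) h' = h' ∘ e.symm := rfl
    have h2 : (Matrix.reindex e e A) = A.submatrix e.symm e.symm := rfl
    rw [h1, h2, submatrix_mulVec_equiv, Equiv.symm_symm]
    have h3 : (h' ∘ e.symm) ∘ e = h' := by funext k; simp
    rw [h3, comp_equiv_symm_dotProduct]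
    congr 1
    funext k
    simp

lemma SG_empty {ι : Type} [Fintype ι] [DecidableEq ι] [IsEmpty ι] : SG (F := F) ψ ι = 1 := by
  haveI : Subsingleton (Matrix ι ι F) := ⟨fun M N => by ext i j; exact isEmptyElim i⟩
  haveI : Unique (Matrix ι ι F) := uniqueOfSubsingleton (0 : Matrix ι ι F)
  rw [SG, Fintype.sum_unique]
  rw [if_pos ⟨by rw [det_isEmpty]; exact one_ne_zero, Subsingleton.elim _ _⟩]
  rw [Fintype.sum_unique]
  have : (default : ι → F) ⬝ᵥ (default : Matrix ι ι F) *ᵥ default = 0 := by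
    simp [dotProduct]
  rw [this, AddChar.map_zero_eq_one]

def uEquivM : F ≃ Matrix Unit Unit F :=
  ⟨uof, fun M => M () (), fun a => rfl, fun M => by ext ⟨⟩ ⟨⟩; rfl⟩

lemma SG_unit (hψ : ψ ≠ 1) : SG (F := F) ψ Unit = 0 := by
  rw [SG, ← Equiv.sum_comp (uEquivM (F := F)) (fun B : Matrix Unit Unit F =>
    if B.det ≠ 0 ∧ Bᵀ = B then ∑ h : Unit → F, ψ (h ⬝ᵥ B *ᵥ h) else 0)]
  have huE : ∀ a : F, uEquivM (F := F) a = uof a := fun _ => rfl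
  have hstep : ∀ a : F, (if (uEquivM (F := F) a).det ≠ 0 ∧ (uEquivM (F := F) a)ᵀ = uEquivM (F := F) a then
      ∑ h : Unit → F, ψ (h ⬝ᵥ (uEquivM (F := F) a) *ᵥ h) else 0)
      = if a ≠ 0 then ∑ x : F, ψ (a * x ^ 2) else 0 := by
    intro a
    have hdet : (uEquivM (F := F) a).det = a := by rw [huE, det_unique]; rfl
    refine if_congr ?_ ?_ rfl
    · rw [hdet]
      simp only [and_iff_left_iff_imp]
      intro _
      rfl
    · rw [← Equiv.sum_comp (Equiv.funUnique Unit F).symm (fun h : Unit → F =>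
        ψ (h ⬝ᵥ (uEquivM (F := F) a) *ᵥ h))]
      refine Finset.sum_congr rfl fun x _ => congrArg ψ ?_
      have : ((Equiv.funUnique Unit F).symm x) = fun _ : Unit => x := rfl
      rw [this, huE]
      simp [dotProduct, mulVec, uof]
      ring
  rw [Finset.sum_congr rfl fun a (_ : a ∈ univ) => hstep a, ← Finset.sum_filter]
  exact sum_G ψ hψ

lemma SG_rec (hψ : ψ ≠ 1) (h2 : (2:F) ≠ 0) (ι : Type) [Fintype ι] [DecidableEq ι] :
    SG (F := F) ψ (Unit ⊕ Unit ⊕ ι) = (Fintype.card F : ℂ) ^ (Fintype.card ι + 2) *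
      (((Fintype.card F : ℂ) ^ (Fintype.card ι + 1) - 1) * SG (F := F) ψ ι) := by
  rw [lemA ψ hψ h2 (Sum.inl () : Unit ⊕ ι), lemB ψ, Fintype.card_sum, Fintype.card_unit]
  ring
def finEquivAux (k : ℕ) : Fin (k+1) ≃ Unit ⊕ Fin k :=
  ((finCongr (by omega : k+1 = 1+k)).trans finSumFinEquiv.symm).trans
    (Equiv.sumCongr finOneEquiv (Equiv.refl (Fin k)))

def finEquiv2 (k : ℕ) : Fin (k+2) ≃ Unit ⊕ Unit ⊕ Fin k :=
  (finEquivAux (k+1)).trans (Equiv.sumCongr (Equiv.refl Unit) (finEquivAux k))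

lemma key (hψ : ψ ≠ 1) (h2 : (2:F) ≠ 0) : ∀ n : ℕ,
    (Even n → SG (F := F) ψ (Fin n) = (Fintype.card F : ℂ) ^ (n*(n+2)/4) *
      ∏ j ∈ Finset.Icc 1 (n/2), ((Fintype.card F : ℂ) ^ (2*j-1) - 1)) ∧
    (Odd n → SG (F := F) ψ (Fin n) = 0) := by
  intro n
  induction n using Nat.strong_induction_on with
  | _ n ih =>
    match n, ih with
    | 0, _ =>
      constructor
      · intro _
        have h1 : SG (F := F) ψ (Fin 0) = 1 := SG_empty ψ
        have h2' : Finset.Icc 1 (0/2) = (∅ : Finset ℕ) := Finset.Icc_eq_empty (by omega)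
        rw [h1, h2']
        norm_num
      · intro h; rw [Nat.odd_iff] at h; omega
    | 1, _ =>
      constructor
      · intro h; rw [Nat.even_iff] at h; omega
      · intro _
        rw [SG_reindex ψ (finOneEquiv.symm : Unit ≃ Fin 1), SG_unit ψ hψ]
    | (k+2), ih =>
      have hrec : SG (F := F) ψ (Fin (k+2)) = (Fintype.card F : ℂ) ^ (k + 2) *
          (((Fintype.card F : ℂ) ^ (k + 1) - 1) * SG (F := F) ψ (Fin k)) := by
        rw [SG_reindex ψ (finEquiv2 k).symm, SG_rec ψ hψ h2 (Fin k), Fintype.card_fin]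
      obtain ⟨ihe, iho⟩ := ih k (by omega)
      constructor
      · intro hev
        have hk : Even k := by rcases hev with ⟨t, ht⟩; exact ⟨t-1, by omega⟩
        obtain ⟨t, ht⟩ := hk
        subst ht
        rw [hrec, ihe ⟨t, rfl⟩]
        have e1 : (t+t)*((t+t)+2)/4 = t*t+t := by
          have h4 : (t+t)*((t+t)+2) = 4*(t*t+t) := by ring
          rw [h4, Nat.mul_div_cancel_left _ (by norm_num)]
        have e2 : (t+t+2)*((t+t+2)+2)/4 = t*t+3*t+2 := by
          have h4 : (t+t+2)*((t+t+2)+2) = 4*(t*t+3*t+2) := by ring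
          rw [h4, Nat.mul_div_cancel_left _ (by norm_num)]
        have e3 : (t+t)/2 = t := by omega
        have e4 : (t+t+2)/2 = t+1 := by omega
        rw [e1, e2, e3, e4, Finset.prod_Icc_succ_top (by omega : 1 ≤ t+1)]
        have e5 : 2*(t+1)-1 = t+t+1 := by omega
        rw [e5]
        ring
      · intro hod
        have hk : Odd k := by rcases hod with ⟨t, ht⟩; exact ⟨t-1, by omega⟩
        rw [hrec, iho hk, mul_zero, mul_zero]

end

open Finset Matrix

/-- Sum of `ψ(hᵀBh)` over all nonsingular symmetric n×n matrices B and all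
column vectors h over F. -/
noncomputable def symGaussSum (F : Type) [Field F] [Fintype F] [DecidableEq F]
    (ψ : AddChar F ℂ) (n : ℕ) : ℂ :=
  ∑ B ∈ Finset.univ.filter
      (fun B : Matrix (Fin n) (Fin n) F => B.det ≠ 0 ∧ Bᵀ = B),
    ∑ h : Fin n → F, ψ (h ⬝ᵥ B.mulVec h)

/-- `∑_{B ∈ Ω_n} ∑_{h ∈ F_q^n} ψ(hᵀBh)` equals `q^{n(n+2)/4}·∏_{j=1}^{n/2}(q^{2j-1}-1)`
for n even, and 0 for n odd, where q = 3^r. -/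
theorem sym_gauss_sum_eval (r : ℕ) (hr : 0 < r) (F : Type) [Field F] [Fintype F]
    [DecidableEq F] (hF : Fintype.card F = 3 ^ r)
    (ψ : AddChar F ℂ) (hψ : ψ ≠ 1) (n : ℕ) (hn : 0 < n) :
    (Even n →
      symGaussSum F ψ n =
        (3 ^ r : ℂ) ^ (n * (n + 2) / 4) *
          ∏ j ∈ Finset.Icc 1 (n / 2), ((3 ^ r : ℂ) ^ (2 * j - 1) - 1)) ∧
    (Odd n → symGaussSum F ψ n = 0) := by
  have h3 : (3:F) = 0 := by
    have hc := Nat.cast_card_eq_zero F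
    rw [hF] at hc
    push_cast at hc
    exact (pow_eq_zero_iff (by omega : r ≠ 0)).mp hc
  have h2 : (2:F) ≠ 0 := by
    intro h
    have h1 : (1:F) = 0 := by
      have h31 : (3:F) - 2 = 1 := by norm_num
      rw [← h31, h3, h, sub_zero]
    exact one_ne_zero h1
  have hQ : (Fintype.card F : ℂ) = (3:ℂ)^r := by rw [hF]; push_cast; ring
  have hSG : symGaussSum F ψ n = SG ψ (Fin n) := by
    unfold symGaussSum
    rw [Finset.sum_filter, SG]
  obtain ⟨he, ho⟩ := key ψ hψ h2 n
  constructor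
  · intro hn'
    rw [hSG, he hn', hQ]
  · intro hn'
    rw [hSG, ho hn']
end

section
/- Let ψ be any nontrivial additive character of F_q. Then ∑_{w∈O(3,q)} ψ(Tr w) = (ψ(1)+ψ(-1))·q·K(ψ;1), where Tr denotes the matrix trace. -/
open Finset Matrix

/-- The matrix J defining the orthogonal group O(3,q). -/
def matJ (F : Type) [Field F] : Matrix (Fin 3) (Fin 3) F := !![0,1,0; 1,0,0; 0,0,1]

/-- The Kloosterman sum `K(ψ;a) = ∑_{α ∈ F^*} ψ(α + a·α⁻¹)`. -/
noncomputable def kloosterman (F : Type) [Field F] [Fintype F] [DecidableEq F]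
    (ψ : AddChar F ℂ) (a : F) : ℂ :=
  ∑ α ∈ Finset.univ.filter (fun α : F => α ≠ 0), ψ (α + a * α⁻¹)

variable {F : Type} [Field F]

def pM (a t e : F) : Matrix (Fin 3) (Fin 3) F :=
  !![a, a*t^2, -(a*t*e); 0, a⁻¹, 0; 0, t, e]

def cM (s a t e : F) : Matrix (Fin 3) (Fin 3) F :=
  pM 1 s 1 * matJ F * pM a t e

lemma matJ_sq : matJ F * matJ F = 1 := by
  ext i j
  fin_cases i <;> fin_cases j <;>
    simp [matJ, Matrix.mul_apply, Fin.sum_univ_succ, Matrix.one_apply]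

lemma pM_mul_pM_neg (h3 : (3:F) = 0) (s : F) : pM 1 s 1 * pM 1 (-s) 1 = 1 := by
  ext i j
  fin_cases i <;> fin_cases j <;>
    simp [pM, Matrix.mul_apply, Fin.sum_univ_succ, Matrix.one_apply] <;>
    linear_combination s^2 * h3


def inO3 (w : Matrix (Fin 3) (Fin 3) F) : Prop :=
  w.det ≠ 0 ∧ wᵀ * matJ F * w = matJ F

lemma inO3_mul {u v : Matrix (Fin 3) (Fin 3) F} (hu : inO3 u) (hv : inO3 v) :
    inO3 (u * v) := by
  obtain ⟨hud, hue⟩ := hu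
  obtain ⟨hvd, hve⟩ := hv
  refine ⟨by simp [Matrix.det_mul, hud, hvd], ?_⟩
  have h1 := congrArg (fun m => vᵀ * m * v) hue
  rw [Matrix.transpose_mul]
  calc vᵀ * uᵀ * matJ F * (u * v) = vᵀ * (uᵀ * matJ F * u) * v := by
        simp only [Matrix.mul_assoc]
    _ = matJ F := by rw [hue, hve]

lemma one_ne_negone (h3 : (3:F) = 0) : (1 : F) ≠ -1 := by
  intro h
  have : (1:F) = 0 := by linear_combination -h + h3
  simp at this

lemma inO3_matJ (h3 : (3:F) = 0) : inO3 (matJ F) := by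
  constructor
  · have : (matJ F).det = -1 := by simp [matJ, Matrix.det_fin_three]
    rw [this]
    intro h
    exact one_ne_negone h3 (by linear_combination (-2 : F) * h)
  · have ht : (matJ F)ᵀ = matJ F := by
      ext i j; fin_cases i <;> fin_cases j <;> simp [matJ, Matrix.vecHead, Matrix.vecTail]
    rw [ht, Matrix.mul_assoc, matJ_sq, Matrix.mul_one]

lemma inO3_pM (h3 : (3:F) = 0) {a e : F} (t : F) (ha : a ≠ 0) (he : e * e = 1) :
    inO3 (pM a t e) := by
  have hinv : a * a⁻¹ = 1 := mul_inv_cancel₀ ha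
  constructor
  · have : (pM a t e).det = e := by
      simp [pM, Matrix.det_fin_three, Matrix.vecHead, Matrix.vecTail]
      linear_combination e * hinv
    rw [this]
    intro h; rw [h, mul_zero] at he; exact one_ne_zero he.symm
  · ext i j
    fin_cases i <;> fin_cases j <;>
      simp [pM, matJ, Matrix.mul_apply, Fin.sum_univ_succ, Matrix.vecHead, Matrix.vecTail] <;>
      first
        | ring1
        | linear_combination hinv
        | linear_combination he
        | linear_combination (-(t*e)) * hinv
        | linear_combination (-(t*e)) * hinv - he
        | linear_combination (2*t^2) * hinv + t^2 * h3
        | linear_combination (t*e + 2*t^2) * hinv + t^2 * h3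
        | linear_combination (t*e) * hinv


lemma inO3_cM (h3 : (3:F) = 0) {a e : F} (s t : F) (ha : a ≠ 0) (he : e * e = 1) :
    inO3 (cM s a t e) :=
  inO3_mul (inO3_mul (inO3_pM h3 s one_ne_zero (by norm_num)) (inO3_matJ h3))
    (inO3_pM h3 t ha he)

lemma cM_eq (s a t e : F) :
    cM s a t e =
      !![a*s^2, a⁻¹ + a*s^2*t^2 - s*t, -(e*s*(a*s*t+1));
         a, a*t^2, -(a*t*e);
         s*a, s*a*t^2 + t, e*(1-s*a*t)] := by
  ext i j
  fin_cases i <;> fin_cases j <;>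
    simp [cM, pM, matJ, Matrix.mul_apply, Fin.sum_univ_succ,
      Matrix.vecHead, Matrix.vecTail] <;>
    ring


lemma entry_eqs {w : Matrix (Fin 3) (Fin 3) F} (hw : wᵀ * matJ F * w = matJ F)
    (i j : Fin 3) :
    w 0 i * w 1 j + w 1 i * w 0 j + w 2 i * w 2 j = matJ F i j := by
  conv_rhs => rw [← hw]
  simp [Matrix.mul_apply, matJ, Fin.sum_univ_succ, Matrix.vecHead, Matrix.vecTail,
    Matrix.transpose_apply]
  ring

lemma p_repr (h3 : (3:F) = 0) {w : Matrix (Fin 3) (Fin 3) F} (hw : inO3 w)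
    (h10 : w 1 0 = 0) :
    ∃ a t e, a ≠ 0 ∧ e * e = 1 ∧ w = pM a t e := by
  obtain ⟨hd, he⟩ := hw
  have E := entry_eqs he
  have E00 := E 0 0; have E01 := E 0 1; have E02 := E 0 2
  have E11 := E 1 1; have E12 := E 1 2; have E22 := E 2 2
  simp [matJ, Matrix.vecHead, Matrix.vecTail, h10] at E00 E01 E02 E11 E12 E22
  have h20 : w 2 0 = 0 := E00
  simp [h20] at E01 E02
  have ha : w 0 0 ≠ 0 := by
    intro h
    apply hd
    rw [Matrix.det_fin_three, h10, h20, h]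
    ring
  have h12 : w 1 2 = 0 := by
    rcases E02 with h | h
    · exact absurd h ha
    · exact h
  refine ⟨w 0 0, w 2 1, w 2 2, ha, ?_, ?_⟩
  · linear_combination E22 - 2 * w 0 2 * h12
  · have h11 : w 1 1 = (w 0 0)⁻¹ := by
      field_simp
      linear_combination E01
    have h01 : w 0 1 = w 0 0 * (w 2 1)^2 := by
      linear_combination (-(w 0 0)) * E11 - w 0 1 * E01 + w 0 1 * w 1 1 * w 0 0 * h3
    have h02 : w 0 2 = -(w 0 0 * w 2 1 * w 2 2) := by
      linear_combination (w 0 0) * E12 - w 0 2 * E01 - w 0 0 * w 0 1 * h12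
    ext i j
    fin_cases i <;> fin_cases j <;>
      simp [pM, Matrix.vecHead, Matrix.vecTail, h10, h20, h11, h12, h01, h02] <;>
      ring


lemma cell_repr (h3 : (3:F) = 0) {w : Matrix (Fin 3) (Fin 3) F} (hw : inO3 w)
    (h10 : w 1 0 ≠ 0) :
    ∃ s a t e, a ≠ 0 ∧ e * e = 1 ∧ w = cM s a t e := by
  set s : F := w 2 0 * (w 1 0)⁻¹ with hs
  have hp : inO3 (matJ F * pM 1 (-s) 1 * w) :=
    inO3_mul (inO3_mul (inO3_matJ h3) (inO3_pM h3 (-s) one_ne_zero (by norm_num))) hw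
  have hp10 : (matJ F * pM 1 (-s) 1 * w) 1 0 = 0 := by
    have E00 := entry_eqs hw.2 0 0
    simp [matJ, Matrix.vecHead, Matrix.vecTail] at E00
    have hsw : s * w 1 0 = w 2 0 := by rw [hs, mul_assoc, inv_mul_cancel₀ h10, mul_one]
    have key : w 0 0 + s^2 * w 1 0 + s * w 2 0 = 0 := by
      have h2 : (w 0 0 + s^2 * w 1 0 + s * w 2 0) * w 1 0 = 0 := by
        linear_combination 2*E00 + (s*w 1 0 + 2*w 2 0)*hsw - (w 0 0 * w 1 0)*h3
      exact (mul_eq_zero.mp h2).resolve_right h10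
    simp [matJ, pM, Matrix.mul_apply, Fin.sum_univ_succ, Matrix.vecHead, Matrix.vecTail]
    first
      | linear_combination key
      | linear_combination -key
  obtain ⟨a, t, e, ha, he, hrep⟩ := p_repr h3 hp hp10
  refine ⟨s, a, t, e, ha, he, ?_⟩
  have hw' : w = pM 1 s 1 * matJ F * (matJ F * pM 1 (-s) 1 * w) := by
    calc w = (pM 1 s 1 * pM 1 (-s) 1) * w := by rw [pM_mul_pM_neg h3, Matrix.one_mul]
      _ = pM 1 s 1 * ((matJ F * matJ F) * pM 1 (-s) 1) * w := by
          rw [matJ_sq, Matrix.one_mul]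
      _ = pM 1 s 1 * matJ F * (matJ F * pM 1 (-s) 1 * w) := by
          simp only [Matrix.mul_assoc]
  rw [hw', hrep]
  rfl


lemma trace_pM (a t e : F) : (pM a t e).trace = a + a⁻¹ + e := by
  simp [pM, Matrix.trace_fin_three, Matrix.vecHead, Matrix.vecTail]

lemma trace_cM (h3 : (3:F) = 0) {e : F} (s a t : F) (he : e * e = 1) :
    (cM s a t e).trace = a * (s + e * t)^2 + e := by
  rw [cM_eq]
  simp [Matrix.trace_fin_three, Matrix.vecHead, Matrix.vecTail]
  linear_combination (-(a*t^2))*he + (-(a*s*e*t))*h3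

lemma char_three [Fintype F] {r : ℕ} (hr : 0 < r) (hF : Fintype.card F = 3 ^ r) :
    (3 : F) = 0 := by
  have hp : (ringChar F).Prime := CharP.char_is_prime F (ringChar F)
  obtain ⟨n, hn, hcard⟩ := FiniteField.card F (ringChar F)
  rw [hF] at hcard
  have h3 : ringChar F = 3 := by
    have hdvd : ringChar F ∣ 3 ^ r := hcard ▸ dvd_pow_self (ringChar F) (by positivity)
    have h2 := hp.dvd_of_dvd_pow hdvd
    exact (Nat.prime_dvd_prime_iff_eq hp (by norm_num)).mp h2
  calc (3 : F) = ((3 : ℕ) : F) := by norm_cast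
    _ = 0 := by rw [← h3]; exact ringChar.Nat.cast_ringChar


section charsums
variable [Fintype F] [DecidableEq F] (ψ : AddChar F ℂ)

lemma sum_units (hψ : ψ ≠ 1) (c : F) :
    ∑ a ∈ Finset.univ.filter (fun a : F => a ≠ 0), ψ (a * c)
      = if c = 0 then ((Fintype.card F : ℂ) - 1) else -1 := by
  have hfil : Finset.univ.filter (fun a : F => a ≠ 0) = Finset.univ.erase 0 := by
    ext a; simp [Finset.mem_erase]
  rw [hfil]
  split_ifs with hc
  · subst hc
    simp only [mul_zero, AddChar.map_zero_eq_one]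
    rw [Finset.sum_const, Finset.card_erase_of_mem (Finset.mem_univ 0), Finset.card_univ]
    have h1 : 1 ≤ Fintype.card F := Fintype.card_pos
    rw [nsmul_eq_mul, Nat.cast_sub h1]
    push_cast
    ring
  · have htot : ∑ a : F, ψ (a * c) = 0 := by
      have heq : ∑ a : F, ψ (a * c) = ∑ a : F, ψ a :=
        Fintype.sum_equiv (Equiv.mulRight₀ c hc) _ _ (fun a => rfl)
      rw [heq]
      exact AddChar.sum_eq_zero_iff_ne_zero.mpr hψ
    have := Finset.sum_erase_add Finset.univ (fun a : F => ψ (a * c)) (Finset.mem_univ 0)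
    rw [htot] at this
    simp only [zero_mul, AddChar.map_zero_eq_one] at this
    linear_combination this
  
lemma sum_if_eq (c0 : F) (x y : ℂ) :
    ∑ s : F, (if s = c0 then x else y) = x + ((Fintype.card F : ℂ) - 1) * y := by
  have hrw : ∀ s : F, (if s = c0 then x else y) = y + (if s = c0 then x - y else 0) := by
    intro s; split <;> ring
  simp_rw [hrw]
  rw [Finset.sum_add_distrib, Finset.sum_ite_eq' Finset.univ c0 (fun _ => x - y),
    if_pos (Finset.mem_univ c0), Finset.sum_const, Finset.card_univ]
  push_cast
  ring

end charsums


lemma cM10 (s a t e : F) : (cM s a t e) 1 0 = a := by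
  rw [cM_eq]; simp [Matrix.vecHead, Matrix.vecTail]

lemma cMs {a : F} (s t e : F) (ha : a ≠ 0) :
    (cM s a t e) 2 0 * ((cM s a t e) 1 0)⁻¹ = s := by
  rw [cM_eq]; simp [Matrix.vecHead, Matrix.vecTail]; field_simp

lemma cMt {a : F} (s t e : F) (ha : a ≠ 0) :
    (cM s a t e) 2 1 - (cM s a t e) 2 0 * ((cM s a t e) 1 0)⁻¹ * (cM s a t e) 1 1 = t := by
  rw [cM_eq]; simp [Matrix.vecHead, Matrix.vecTail]; field_simp; ring

lemma cMe {a : F} (s t e : F) (ha : a ≠ 0) :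
    (cM s a t e) 2 2 - (cM s a t e) 2 0 * ((cM s a t e) 1 0)⁻¹ * (cM s a t e) 1 2 = e := by
  rw [cM_eq]; simp [Matrix.vecHead, Matrix.vecTail]; field_simp; ring

/-- Gauss sum for O(3,q): `∑_{w ∈ O(3,q)} ψ(Tr w) = (ψ(1)+ψ(-1))·q·K(ψ;1)`, where q = 3^r. -/
theorem gauss_sum_O3 (r : ℕ) (hr : 0 < r) (F : Type) [Field F] [Fintype F] [DecidableEq F]
    (hF : Fintype.card F = 3 ^ r) (ψ : AddChar F ℂ) (hψ : ψ ≠ 1) :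
    ∑ w ∈ Finset.univ.filter
        (fun w : Matrix (Fin 3) (Fin 3) F =>
          w.det ≠ 0 ∧ wᵀ * matJ F * w = matJ F),
      ψ w.trace
      = (ψ 1 + ψ (-1)) * (3 ^ r : ℂ) * kloosterman F ψ 1 := by
  classical
  have h3 : (3:F) = 0 := char_three hr hF
  have hne : (1:F) ≠ -1 := one_ne_negone h3
  have hq : ((Fintype.card F : ℂ)) = (3:ℂ)^r := by rw [hF]; push_cast; ring
  rw [← Finset.sum_filter_add_sum_filter_not
    (Finset.univ.filter (fun w : Matrix (Fin 3) (Fin 3) F =>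
      w.det ≠ 0 ∧ wᵀ * matJ F * w = matJ F)) (fun w => w 1 0 = 0) (fun w => ψ w.trace)]
  have hA : ∑ w ∈ (Finset.univ.filter (fun w : Matrix (Fin 3) (Fin 3) F =>
      w.det ≠ 0 ∧ wᵀ * matJ F * w = matJ F)).filter (fun w => w 1 0 = 0), ψ w.trace
      = (ψ 1 + ψ (-1)) * (3 ^ r : ℂ) * kloosterman F ψ 1 := by
    have step1 : ∑ w ∈ (Finset.univ.filter (fun w : Matrix (Fin 3) (Fin 3) F =>
        w.det ≠ 0 ∧ wᵀ * matJ F * w = matJ F)).filter (fun w => w 1 0 = 0), ψ w.trace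
        = ∑ p ∈ Finset.univ.filter (fun p : F × F × F => p.1 ≠ 0 ∧ p.2.2 * p.2.2 = 1),
            ψ (pM p.1 p.2.1 p.2.2).trace := by
      refine Finset.sum_nbij' (fun w => (w 0 0, w 2 1, w 2 2))
        (fun p => pM p.1 p.2.1 p.2.2) ?_ ?_ ?_ ?_ ?_
      · intro w hw
        simp only [Finset.mem_filter, Finset.mem_univ, true_and] at hw ⊢
        obtain ⟨a, t, e, ha, he, hrep⟩ := p_repr h3 hw.1 hw.2
        rw [hrep]
        simpa [pM, Matrix.vecHead, Matrix.vecTail] using ⟨ha, he⟩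
      · intro p hp
        simp only [Finset.mem_filter, Finset.mem_univ, true_and] at hp ⊢
        exact ⟨inO3_pM h3 p.2.1 hp.1 hp.2, by simp [pM]⟩
      · intro w hw
        simp only [Finset.mem_filter, Finset.mem_univ, true_and] at hw
        obtain ⟨a, t, e, ha, he, hrep⟩ := p_repr h3 hw.1 hw.2
        rw [hrep]
        simp [pM, Matrix.vecHead, Matrix.vecTail]
      · intro p hp
        simp [pM, Matrix.vecHead, Matrix.vecTail]
      · intro w hw
        simp only [Finset.mem_filter, Finset.mem_univ, true_and] at hw
        obtain ⟨a, t, e, ha, he, hrep⟩ := p_repr h3 hw.1 hw.2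
        rw [hrep]
        simp [pM, Matrix.vecHead, Matrix.vecTail]
    rw [step1]
    have hTa : Finset.univ.filter (fun p : F × F × F => p.1 ≠ 0 ∧ p.2.2 * p.2.2 = 1)
        = (Finset.univ.filter (fun a : F => a ≠ 0)) ×ˢ
          ((Finset.univ : Finset F) ×ˢ (Finset.univ.filter (fun e : F => e * e = 1))) := by
      ext ⟨a, t, e⟩
      simp [Finset.mem_product]
    rw [hTa]
    rw [Finset.sum_product]
    have hEf : Finset.univ.filter (fun e : F => e * e = 1) = ({1, -1} : Finset F) := by
      ext e; simp [mul_self_eq_one_iff]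
    have inner : ∀ a : F, (∑ q ∈ (Finset.univ : Finset F) ×ˢ
          (Finset.univ.filter (fun e : F => e * e = 1)), ψ (pM a q.1 q.2).trace)
        = ((ψ 1 + ψ (-1)) * (3:ℂ)^r) * ψ (a + a⁻¹) := by
      intro a
      rw [Finset.sum_product, hEf]
      simp only [trace_pM, Finset.sum_pair hne, AddChar.map_add_eq_mul]
      rw [Finset.sum_const, Finset.card_univ, nsmul_eq_mul, hq]
      ring
    rw [Finset.sum_congr rfl (fun a _ => inner a), ← Finset.mul_sum]
    simp only [kloosterman, one_mul]
    try ring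
  have hB : ∑ w ∈ (Finset.univ.filter (fun w : Matrix (Fin 3) (Fin 3) F =>
      w.det ≠ 0 ∧ wᵀ * matJ F * w = matJ F)).filter (fun w => ¬ w 1 0 = 0), ψ w.trace
      = 0 := by
    have step1 : ∑ w ∈ (Finset.univ.filter (fun w : Matrix (Fin 3) (Fin 3) F =>
        w.det ≠ 0 ∧ wᵀ * matJ F * w = matJ F)).filter (fun w => ¬ w 1 0 = 0), ψ w.trace
        = ∑ p ∈ Finset.univ.filter
            (fun p : F × F × F × F => p.2.2.2 ≠ 0 ∧ p.2.1 * p.2.1 = 1),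
            ψ (cM p.2.2.1 p.2.2.2 p.1 p.2.1).trace := by
      refine Finset.sum_nbij'
        (fun w => (w 2 1 - (w 2 0 * (w 1 0)⁻¹) * w 1 1,
                   w 2 2 - (w 2 0 * (w 1 0)⁻¹) * w 1 2,
                   w 2 0 * (w 1 0)⁻¹, w 1 0))
        (fun p => cM p.2.2.1 p.2.2.2 p.1 p.2.1) ?_ ?_ ?_ ?_ ?_
      · intro w hw
        simp only [Finset.mem_filter, Finset.mem_univ, true_and] at hw ⊢
        obtain ⟨s, a, t, e, ha, he, hrep⟩ := cell_repr h3 hw.1 hw.2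
        beta_reduce
        rw [hrep, cMe s t e ha, cM10]
        exact ⟨ha, he⟩
      · intro p hp
        simp only [Finset.mem_filter, Finset.mem_univ, true_and] at hp ⊢
        refine ⟨inO3_cM h3 p.2.2.1 p.1 hp.1 hp.2, ?_⟩
        rw [cM10]
        exact hp.1
      · intro w hw
        simp only [Finset.mem_filter, Finset.mem_univ, true_and] at hw
        obtain ⟨s, a, t, e, ha, he, hrep⟩ := cell_repr h3 hw.1 hw.2
        beta_reduce
        rw [hrep, cMt s t e ha, cMe s t e ha, cMs s t e ha, cM10]
      · intro p hp
        simp only [Finset.mem_filter, Finset.mem_univ, true_and] at hp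
        beta_reduce
        rw [cMt p.2.2.1 p.1 p.2.1 hp.1, cMe p.2.2.1 p.1 p.2.1 hp.1,
          cMs p.2.2.1 p.1 p.2.1 hp.1, cM10]
      · intro w hw
        simp only [Finset.mem_filter, Finset.mem_univ, true_and] at hw
        obtain ⟨s, a, t, e, ha, he, hrep⟩ := cell_repr h3 hw.1 hw.2
        beta_reduce
        rw [hrep, cMt s t e ha, cMe s t e ha, cMs s t e ha, cM10]
    rw [step1]
    have hTb : Finset.univ.filter
          (fun p : F × F × F × F => p.2.2.2 ≠ 0 ∧ p.2.1 * p.2.1 = 1)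
        = (Finset.univ : Finset F) ×ˢ ((Finset.univ.filter (fun e : F => e * e = 1)) ×ˢ
            ((Finset.univ : Finset F) ×ˢ (Finset.univ.filter (fun a : F => a ≠ 0)))) := by
      ext ⟨t, e, s, a⟩
      simp [Finset.mem_product]
      tauto
    rw [hTb]
    simp only [Finset.sum_product]
    refine Finset.sum_eq_zero fun t _ => Finset.sum_eq_zero fun e hee => ?_
    simp only [Finset.mem_filter, Finset.mem_univ, true_and] at hee
    have hwtr : ∀ s aa : F, ψ ((cM s aa t e).trace) = ψ (aa * (s + e*t)^2) * ψ e := by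
      intro s aa
      rw [trace_cM h3 s aa t hee, AddChar.map_add_eq_mul]
    simp only [hwtr]
    have hstep : ∀ s : F, (∑ a ∈ Finset.univ.filter (fun a : F => a ≠ 0),
        ψ (a * (s + e*t)^2) * ψ e)
        = (if s = -(e*t) then ((Fintype.card F : ℂ) - 1) else -1) * ψ e := by
      intro s
      rw [← Finset.sum_mul, sum_units ψ hψ]
      have hcond : ((s + e*t)^2 = 0) ↔ (s = -(e*t)) := by
        rw [pow_eq_zero_iff (by norm_num : 2 ≠ 0), add_eq_zero_iff_eq_neg]
      rw [if_congr hcond rfl rfl]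
    simp only [hstep]
    rw [← Finset.sum_mul, sum_if_eq]
    ring
  rw [hA, hB, add_zero]
end

section
/- Let λ be the canonical additive character of F_q and let a ∈ F_q^*. Then ∑_{w∈SO(3,q)} λ(a·Tr w) = λ(a)·q·K(λ;a²), where Tr denotes the matrix trace. -/
open Finset Matrix

/-- The canonical additive character `λ(x) = e^{2πi·tr(x)/3}` of a finite field of
characteristic 3, where tr is the absolute trace to F_3. -/
noncomputable def canChar (F : Type) [Field F] [Fintype F] [Algebra (ZMod 3) F] (x : F) : ℂ :=
  Complex.exp (2 * Real.pi * Complex.I * ((Algebra.trace (ZMod 3) F x).val : ℂ) / 3)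

/-- The Kloosterman sum `K(λ;a) = ∑_{α ∈ F^*} λ(α + a·α⁻¹)` for the canonical character. -/
noncomputable def kloos (F : Type) [Field F] [Fintype F] [DecidableEq F]
    [Algebra (ZMod 3) F] (a : F) : ℂ :=
  ∑ α ∈ Finset.univ.filter (fun α : F => α ≠ 0), canChar F (α + a * α⁻¹)

section CharLemmas
variable {F : Type} [Field F] [Fintype F] [Algebra (ZMod 3) F]

lemma canChar_zero : canChar F 0 = 1 := by
  unfold canChar
  simp

lemma canChar_add (x y : F) : canChar F (x + y) = canChar F x * canChar F y := by
  unfold canChar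
  rw [map_add, ← Complex.exp_add]
  set m := Algebra.trace (ZMod 3) F x
  set n := Algebra.trace (ZMod 3) F y
  have hmod : ((m + n).val : ℂ) + 3 * (((m.val + n.val) / 3 : ℕ) : ℂ)
      = (m.val : ℂ) + (n.val : ℂ) := by
    have h : (m + n).val + 3 * ((m.val + n.val) / 3) = m.val + n.val := by
      rw [ZMod.val_add]; exact Nat.mod_add_div _ _
    exact_mod_cast congrArg (Nat.cast : ℕ → ℂ) h
  have hexp : 2 * (Real.pi : ℂ) * Complex.I * ((m + n).val : ℂ) / 3
      = 2 * (Real.pi : ℂ) * Complex.I * (m.val : ℂ) / 3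
        + 2 * (Real.pi : ℂ) * Complex.I * (n.val : ℂ) / 3
        - (((m.val + n.val) / 3 : ℕ) : ℂ) * (2 * (Real.pi : ℂ) * Complex.I) := by
    linear_combination (2 * (Real.pi : ℂ) * Complex.I / 3) * hmod
  rw [hexp, Complex.exp_sub, Complex.exp_nat_mul_two_pi_mul_I, div_one]

lemma sum_canChar_univ : ∑ x : F, canChar F x = 0 := by
  haveI : Module.Finite (ZMod 3) F := Module.finite_iff_finite.mpr inferInstance
  obtain ⟨z, hz⟩ := Algebra.trace_surjective (ZMod 3) F 1
  have hshift : ∑ x : F, canChar F x = ∑ x : F, canChar F (x + z) :=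
    (Fintype.sum_equiv (Equiv.addRight z) (fun x => canChar F (x + z)) (canChar F)
      (fun x => rfl)).symm
  have hmul : ∑ x : F, canChar F (x + z) = (∑ x : F, canChar F x) * canChar F z := by
    simp_rw [canChar_add]; rw [← Finset.sum_mul]
  have hωne : canChar F z ≠ 1 := by
    unfold canChar
    rw [hz]
    intro hcon
    rw [Complex.exp_eq_one_iff] at hcon
    obtain ⟨k, hk⟩ := hcon
    have h2 : (2 * (Real.pi : ℂ) * Complex.I) ≠ 0 := by
      simp [Real.pi_ne_zero, Complex.I_ne_zero]
    have hval : (((1 : ZMod 3).val : ℂ)) = 1 := by norm_num [ZMod.val_one]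
    rw [hval] at hk
    have h1 : (2 * (Real.pi : ℂ) * Complex.I) * ((1 : ℂ)/3 - k) = 0 := by
      linear_combination hk
    rcases mul_eq_zero.mp h1 with h | h
    · exact h2 h
    · have h3 : (3 : ℂ) * k = 1 := by
        field_simp at h
        linear_combination -h
      have h4 : (3 * k : ℤ) = 1 := by exact_mod_cast h3
      omega
  have hS : (∑ x : F, canChar F x) * (canChar F z - 1) = 0 := by
    have := hshift.trans hmul
    linear_combination -this
  rcases mul_eq_zero.mp hS with h | h
  · exact h
  · exact absurd (by linear_combination h) hωne

lemma sum_canChar_mul (b : F) (hb : b ≠ 0) : ∑ x : F, canChar F (b * x) = 0 := by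
  have := Fintype.sum_equiv (Equiv.mulLeft₀ b hb) (fun x => canChar F (b * x)) (canChar F)
    (fun x => rfl)
  rw [this, sum_canChar_univ]

lemma sum_canChar_mul_ne [DecidableEq F] (b : F) (hb : b ≠ 0) :
    ∑ x ∈ Finset.univ.filter (fun x : F => x ≠ 0), canChar F (b * x) = -1 := by
  have hsplit : ∑ x ∈ Finset.univ.filter (fun x : F => x ≠ 0), canChar F (b * x)
      + ∑ x ∈ Finset.univ.filter (fun x : F => ¬ x ≠ 0), canChar F (b * x)
      = ∑ x : F, canChar F (b * x) :=
    Finset.sum_filter_add_sum_filter_not _ _ _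
  have h0 : Finset.univ.filter (fun x : F => ¬ x ≠ 0) = {0} := by
    ext x; simp
  rw [h0] at hsplit
  simp only [Finset.sum_singleton, mul_zero, canChar_zero] at hsplit
  rw [sum_canChar_mul b hb] at hsplit
  linear_combination hsplit

end CharLemmas


def M1mat (F : Type) [Field F] (t c : F) : Matrix (Fin 3) (Fin 3) F :=
  !![t, t*c^2, t*c; 0, t⁻¹, 0; 0, -c, 1]

def M2mat (F : Type) [Field F] (t c d : F) : Matrix (Fin 3) (Fin 3) F :=
  !![t*c^2, t*(c^2*d^2 + c*d + 1), t*(c^2*d - c);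
     t⁻¹, t⁻¹*d^2, t⁻¹*d;
     -c, -(c*d^2) + d, -(c*d) - 1]

section MatLemmas
variable {F : Type} [Field F]

lemma M1_transpose (t c : F) :
    (M1mat F t c)ᵀ = !![t, 0, 0; t*c^2, t⁻¹, -c; t*c, 0, 1] := by
  ext i j
  fin_cases i <;> fin_cases j <;> rfl

lemma M2_transpose (t c d : F) :
    (M2mat F t c d)ᵀ = !![t*c^2, t⁻¹, -c;
      t*(c^2*d^2 + c*d + 1), t⁻¹*d^2, -(c*d^2) + d;
      t*(c^2*d - c), t⁻¹*d, -(c*d) - 1] := by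
  ext i j
  fin_cases i <;> fin_cases j <;> rfl

lemma M1_orth (h3 : (3:F) = 0) (t c : F) (ht : t ≠ 0) :
    (M1mat F t c)ᵀ * matJ F * (M1mat F t c) = matJ F := by
  rw [M1_transpose]
  ext i j
  fin_cases i <;> fin_cases j <;>
    simp [M1mat, matJ, Matrix.mul_apply, Fin.sum_univ_three, Matrix.vecHead, Matrix.vecTail] <;>
    field_simp <;> ring_nf <;> simp [h3]

lemma M1_det (t c : F) (ht : t ≠ 0) : (M1mat F t c).det = 1 := by
  rw [Matrix.det_fin_three]
  simp [M1mat, Matrix.vecHead, Matrix.vecTail]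
  field_simp

lemma M1_trace (t c : F) : (M1mat F t c).trace = t + t⁻¹ + 1 := by
  simp [Matrix.trace_fin_three, M1mat]

lemma M2_orth (h3 : (3:F) = 0) (t c d : F) (ht : t ≠ 0) :
    (M2mat F t c d)ᵀ * matJ F * (M2mat F t c d) = matJ F := by
  rw [M2_transpose]
  ext i j
  fin_cases i <;> fin_cases j <;>
    simp [M2mat, matJ, Matrix.mul_apply, Fin.sum_univ_three, Matrix.vecHead, Matrix.vecTail] <;>
    field_simp <;> ring_nf <;> simp [h3]

lemma M2_det (t c d : F) (ht : t ≠ 0) : (M2mat F t c d).det = 1 := by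
  rw [Matrix.det_fin_three]
  simp [M2mat, Matrix.vecHead, Matrix.vecTail]
  field_simp
  ring

lemma M2_trace (t c d : F) : (M2mat F t c d).trace = t*c^2 + t⁻¹*d^2 + (-(c*d) - 1) := by
  simp [Matrix.trace_fin_three, M2mat]

end MatLemmas

section Classify
variable {F : Type} [Field F]

lemma SO3_cases (h3 : (3:F) = 0) (w : Matrix (Fin 3) (Fin 3) F)
    (horth : wᵀ * matJ F * w = matJ F) (hdet0 : w.det = 1) :
    (∃ t c : F, t ≠ 0 ∧ w = M1mat F t c) ∨ (∃ t c d : F, t ≠ 0 ∧ w = M2mat F t c d) := by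
  have e00 := congrFun (congrFun horth 0) 0
  have e01 := congrFun (congrFun horth 0) 1
  have e02 := congrFun (congrFun horth 0) 2
  have e11 := congrFun (congrFun horth 1) 1
  have e12 := congrFun (congrFun horth 1) 2
  have e22 := congrFun (congrFun horth 2) 2
  simp only [Matrix.mul_apply, Fin.sum_univ_three, Matrix.transpose_apply, matJ,
    Matrix.cons_val', Matrix.cons_val_zero, Matrix.cons_val_one, Matrix.head_cons,
    Matrix.empty_val', Matrix.cons_val_fin_one, Matrix.head_fin_const, Matrix.of_apply,
    Matrix.cons_val_two, Matrix.tail_cons] at e00 e01 e02 e11 e12 e22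
  have E00 : w 0 0 * w 1 0 + w 1 0 * w 0 0 + w 2 0 * w 2 0 = 0 := by linear_combination e00
  have E01 : w 0 0 * w 1 1 + w 1 0 * w 0 1 + w 2 0 * w 2 1 = 1 := by linear_combination e01
  have E02 : w 0 0 * w 1 2 + w 1 0 * w 0 2 + w 2 0 * w 2 2 = 0 := by linear_combination e02
  have E11 : w 0 1 * w 1 1 + w 1 1 * w 0 1 + w 2 1 * w 2 1 = 0 := by linear_combination e11
  have E12 : w 0 1 * w 1 2 + w 1 1 * w 0 2 + w 2 1 * w 2 2 = 0 := by linear_combination e12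
  have E22 : w 0 2 * w 1 2 + w 1 2 * w 0 2 + w 2 2 * w 2 2 = 1 := by linear_combination e22
  rw [Matrix.det_fin_three] at hdet0
  by_cases h10 : w 1 0 = 0
  · -- first Bruhat cell
    have hx2 : w 2 0 ^ 2 = 0 := by linear_combination E00 - (2 * w 0 0) * h10
    have h20 : w 2 0 = 0 := by
      have := pow_eq_zero_iff (n := 2) (by norm_num) |>.mp hx2
      exact this
    have h1 : w 0 0 * w 1 1 = 1 := by
      linear_combination E01 - w 0 1 * h10 - w 2 1 * h20
    have hne : w 0 0 ≠ 0 := left_ne_zero_of_mul_eq_one h1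
    have har : w 0 0 * w 1 2 = 0 := by
      linear_combination E02 - w 0 2 * h10 - w 2 2 * h20
    have h12 : w 1 2 = 0 := (mul_eq_zero.mp har).resolve_left hne
    have h22 : w 2 2 = 1 := by
      linear_combination hdet0 + w 0 0 * w 2 1 * h12 + w 0 1 * w 2 2 * h10 -
        w 0 1 * w 1 2 * h20 - w 0 2 * w 2 1 * h10 + w 0 2 * w 1 1 * h20 - w 2 2 * h1
    have h01 : w 0 1 = w 0 0 * w 2 1 ^ 2 := by
      linear_combination (-(w 0 0)) * E11 - w 0 1 * h1 + (w 0 0 * w 0 1 * w 1 1) * h3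
    have h02 : w 0 2 = -(w 0 0 * w 2 1) := by
      linear_combination w 0 0 * E12 - w 0 0 * w 0 1 * h12 - w 0 0 * w 2 1 * h22 - w 0 2 * h1
    have h11 : w 1 1 = (w 0 0)⁻¹ := eq_inv_of_mul_eq_one_left (by linear_combination h1)
    refine Or.inl ⟨w 0 0, -(w 2 1), hne, ?_⟩
    ext i j
    fin_cases i <;> fin_cases j <;>
      simp only [M1mat, Matrix.cons_val', Matrix.cons_val_zero, Matrix.cons_val_one,
        Matrix.head_cons, Matrix.empty_val', Matrix.cons_val_fin_one, Matrix.head_fin_const,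
        Matrix.of_apply, Matrix.cons_val_two, Matrix.tail_cons]
    · show w 0 0 = w 0 0; rfl
    · show w 0 1 = w 0 0 * (-(w 2 1))^2; linear_combination h01
    · show w 0 2 = w 0 0 * (-(w 2 1)); linear_combination h02
    · show w 1 0 = 0; exact h10
    · show w 1 1 = (w 0 0)⁻¹; exact h11
    · show w 1 2 = 0; exact h12
    · show w 2 0 = 0; exact h20
    · show w 2 1 = -(-(w 2 1)); ring
    · show w 2 2 = 1; exact h22
  · -- second Bruhat cell
    have hn := h10
    have T1 : w 0 0 * w 1 0 = w 2 0 ^ 2 := by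
      linear_combination (-1) * E00 + (w 0 0 * w 1 0) * h3
    have P2 : (w 2 1 * w 1 0 - w 2 0 * w 1 1)^2 = w 1 1 * w 1 0 := by
      linear_combination ((w 1 0)^2) * E11 + (w 1 0 * w 1 1) * E01 + (-(w 1 1)^2) * T1 +
        (-(w 1 0 * w 1 1 * w 2 0 * w 2 1) - w 0 1 * (w 1 0)^2 * w 1 1) * h3
    have P3 : w 1 2 * w 1 0 + (w 2 1 * w 1 0 - w 2 0 * w 1 1) * (w 2 2 * w 1 0 - w 2 0 * w 1 2) = 0 := by
      linear_combination ((w 1 0)^2) * E12 + (2 * w 1 0 * w 1 2) * E01 + (2 * w 1 0 * w 1 1) * E02 +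
        (2 * w 1 1 * w 1 2) * T1 +
        (w 1 1 * w 1 2 * (w 2 0)^2 + w 1 0 * w 1 2 - w 1 0 * w 1 2 * w 2 0 * w 2 1 -
          w 1 0 * w 1 1 * w 2 0 * w 2 2 - w 0 2 * (w 1 0)^2 * w 1 1 - w 0 1 * (w 1 0)^2 * w 1 2 -
          2 * w 0 0 * w 1 0 * w 1 1 * w 1 2) * h3
    have P1 : (w 2 2 * w 1 0 - w 2 0 * w 1 2)^2 = (w 1 0)^2 := by
      linear_combination ((w 1 0)^2) * E22 + (w 1 0 * w 1 2) * E02 + (2 * (w 1 2)^2) * T1 +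
        ((w 1 2)^2 * (w 2 0)^2 - w 1 0 * w 1 2 * w 2 0 * w 2 2 - w 0 2 * (w 1 0)^2 * w 1 2 -
          w 0 0 * w 1 0 * (w 1 2)^2) * h3
    have hsplit : (w 2 2 * w 1 0 - w 2 0 * w 1 2 - w 1 0) * (w 2 2 * w 1 0 - w 2 0 * w 1 2 + w 1 0) = 0 := by
      linear_combination P1
    rcases mul_eq_zero.mp hsplit with hb | hu
    · -- bad branch : contradiction
      exfalso
      have bhE' : w 1 0 * ((w 2 1 * w 1 0 - w 2 0 * w 1 1) + w 1 2) = 0 := by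
        linear_combination P3 + (w 1 1 * w 2 0 - w 1 0 * w 2 1) * hb
      have bE : (w 2 1 * w 1 0 - w 2 0 * w 1 1) + w 1 2 = 0 :=
        (mul_eq_zero.mp bhE').resolve_left hn
      have bT2 : w 1 1 * w 1 0 = (w 1 2)^2 := by
        linear_combination (-1) * P2 + (-(w 1 2) - w 1 1 * w 2 0 + w 1 0 * w 2 1) * bE
      have b3 : w 2 1 * (w 1 0)^2 - (w 2 0 * (w 1 2)^2 - w 1 2 * w 1 0) = 0 := by
        linear_combination (w 1 0) * bE + (w 2 0) * bT2
      have b5 : w 0 1 * (w 1 0)^3 - ((w 1 0)^2 + (w 2 0)^2 * (w 1 2)^2 + w 2 0 * w 1 2 * w 1 0) = 0 := by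
        linear_combination ((w 1 0)^2) * E01 + (2 * w 2 0) * b3 + (2 * w 1 0 * w 1 1) * T1 +
          (2 * (w 2 0)^2) * bT2 +
          ((w 1 2)^2 * (w 2 0)^2 - w 1 0 * w 1 2 * w 2 0 - (w 1 0)^2 * w 2 0 * w 2 1 -
            w 0 0 * (w 1 0)^2 * w 1 1) * h3
      have b6 : w 0 2 * (w 1 0)^2 - ((w 2 0)^2 * w 1 2 - w 2 0 * w 1 0) = 0 := by
        linear_combination (w 1 0) * E02 + (-(w 1 2)) * T1 + (-(w 2 0)) * hb +
          (-(w 1 2 * (w 2 0)^2)) * h3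
      have hqz : (w 1 1 * w 2 2 - w 1 2 * w 2 1) * (w 1 0)^2 + (w 1 2)^2 * w 1 0 = 0 := by
        linear_combination (w 1 0 * w 2 2) * bT2 + ((w 1 2)^2) * hb + (-(w 1 2)) * b3 +
          (w 1 0 * (w 1 2)^2) * h3
      have k1 : w 0 0 * (w 1 1 * w 2 2 - w 1 2 * w 2 1) * (w 1 0)^4 + (w 2 0)^2 * (w 1 2)^2 * (w 1 0)^2 = 0 := by
        linear_combination (-((w 1 0)^3 * w 1 2 * w 2 1) + (w 1 0)^3 * w 1 1 * w 2 2) * T1 +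
          (w 1 0 * (w 2 0)^2) * hqz
      have k2 : w 0 1 * (w 1 0 * w 2 2 - w 1 2 * w 2 0) * (w 1 0)^4 -
          ((w 1 0)^4 + (w 2 0)^2 * (w 1 2)^2 * (w 1 0)^2 + w 2 0 * w 1 2 * (w 1 0)^3) = 0 := by
        linear_combination ((w 1 0)^2) * b5 + (w 0 1 * (w 1 0)^4) * hb
      have m3 : (w 1 0 * w 2 1 - w 1 1 * w 2 0) * w 1 0 + w 1 2 * w 1 0 = 0 := by
        linear_combination b3 + (-(w 2 0)) * bT2
      have k3 : w 0 2 * (w 1 0 * w 2 1 - w 1 1 * w 2 0) * (w 1 0)^4 +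
          ((w 2 0)^2 * (w 1 2)^2 * (w 1 0)^2 - w 2 0 * w 1 2 * (w 1 0)^3) = 0 := by
        linear_combination (w 0 2 * (w 1 0)^3) * m3 + (-((w 1 0)^2 * w 1 2)) * b6
      have key : (w 1 0)^4 + (w 1 0)^4 = 0 := by
        linear_combination (-((w 1 0)^4)) * hdet0 + k1 - k2 + k3 +
          (-((w 1 0)^2 * (w 1 2)^2 * (w 2 0)^2)) * h3
      have hp4 : (w 1 0)^4 = 0 := by
        linear_combination (-1) * key + ((w 1 0)^4) * h3
      exact hn (pow_eq_zero_iff (n := 4) (by norm_num) |>.mp hp4)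
    · -- good branch
      have ghE' : w 1 0 * ((w 2 1 * w 1 0 - w 2 0 * w 1 1) - w 1 2) = 0 := by
        linear_combination (-1) * P3 + (-(w 1 1 * w 2 0) + w 1 0 * w 2 1) * hu
      have hE : (w 2 1 * w 1 0 - w 2 0 * w 1 1) - w 1 2 = 0 :=
        (mul_eq_zero.mp ghE').resolve_left hn
      have T2 : w 1 1 * w 1 0 = (w 1 2)^2 := by
        linear_combination (-1) * P2 + (w 1 2 - w 1 1 * w 2 0 + w 1 0 * w 2 1) * hE
      have T3 : w 2 1 * (w 1 0)^2 = w 2 0 * (w 1 2)^2 + w 1 2 * w 1 0 := by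
        linear_combination (w 1 0) * hE + (w 2 0) * T2
      have T5 : w 0 1 * (w 1 0)^3 = (w 2 0)^2 * (w 1 2)^2 - w 2 0 * w 1 2 * w 1 0 + (w 1 0)^2 := by
        linear_combination ((w 1 0)^2) * E01 + (2 * w 2 0) * T3 + (2 * w 1 0 * w 1 1) * T1 +
          (2 * (w 2 0)^2) * T2 +
          ((w 1 2)^2 * (w 2 0)^2 + w 1 0 * w 1 2 * w 2 0 - (w 1 0)^2 * w 2 0 * w 2 1 -
            w 0 0 * (w 1 0)^2 * w 1 1) * h3
      have T6 : w 0 2 * (w 1 0)^2 = (w 2 0)^2 * w 1 2 + w 2 0 * w 1 0 := by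
        linear_combination (w 1 0) * E02 + (-(w 1 2)) * T1 + (-(w 2 0)) * hu +
          (-(w 1 2 * (w 2 0)^2)) * h3
      have T4 : w 2 2 * w 1 0 = w 2 0 * w 1 2 - w 1 0 := by linear_combination hu
      refine Or.inr ⟨(w 1 0)⁻¹, -(w 2 0), w 1 2 * (w 1 0)⁻¹, inv_ne_zero hn, ?_⟩
      ext i j
      fin_cases i <;> fin_cases j <;>
        simp only [M2mat, Matrix.cons_val', Matrix.cons_val_zero, Matrix.cons_val_one,
          Matrix.head_cons, Matrix.empty_val', Matrix.cons_val_fin_one, Matrix.head_fin_const,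
          Matrix.of_apply, Matrix.cons_val_two, Matrix.tail_cons]
      · show w 0 0 = (w 1 0)⁻¹ * (-(w 2 0))^2
        field_simp
        linear_combination T1
      · show w 0 1 = (w 1 0)⁻¹ * ((-(w 2 0))^2 * (w 1 2 * (w 1 0)⁻¹)^2 +
          -(w 2 0) * (w 1 2 * (w 1 0)⁻¹) + 1)
        field_simp
        linear_combination T5
      · show w 0 2 = (w 1 0)⁻¹ * ((-(w 2 0))^2 * (w 1 2 * (w 1 0)⁻¹) - -(w 2 0))
        field_simp
        linear_combination T6
      · show w 1 0 = ((w 1 0)⁻¹)⁻¹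
        rw [inv_inv]
      · show w 1 1 = ((w 1 0)⁻¹)⁻¹ * (w 1 2 * (w 1 0)⁻¹)^2
        rw [inv_inv]
        field_simp
        linear_combination T2
      · show w 1 2 = ((w 1 0)⁻¹)⁻¹ * (w 1 2 * (w 1 0)⁻¹)
        rw [inv_inv]
        field_simp
      · show w 2 0 = -(-(w 2 0))
        ring
      · show w 2 1 = -(-(w 2 0) * (w 1 2 * (w 1 0)⁻¹)^2) + w 1 2 * (w 1 0)⁻¹
        field_simp
        linear_combination T3
      · show w 2 2 = -(-(w 2 0) * (w 1 2 * (w 1 0)⁻¹)) - 1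
        field_simp
        linear_combination T4

end Classify

/-- `∑_{w ∈ SO(3,q)} λ(a·Tr w) = λ(a)·q·K(λ;a²)` for the canonical additive character λ
and any a ∈ F_q^*, where q = 3^r. -/
theorem gauss_sum_SO3_twisted (r : ℕ) (hr : 0 < r) (F : Type) [Field F] [Fintype F]
    [DecidableEq F] [Algebra (ZMod 3) F] (hF : Fintype.card F = 3 ^ r)
    (a : F) (ha : a ≠ 0) :
    ∑ w ∈ Finset.univ.filter
        (fun w : Matrix (Fin 3) (Fin 3) F =>
          w.det ≠ 0 ∧ wᵀ * matJ F * w = matJ F ∧ w.det = 1),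
      canChar F (a * w.trace)
      = canChar F a * (3 ^ r : ℂ) * kloos F (a ^ 2) := by
  classical
  haveI : Fact (Nat.Prime 3) := ⟨by norm_num⟩
  have h3 : (3:F) = 0 := by
    haveI : CharP F 3 := charP_of_injective_algebraMap (algebraMap (ZMod 3) F).injective 3
    exact CharP.cast_eq_zero F 3
  have hcard1 : (1:ℕ) ≤ 3 ^ r := Nat.one_le_pow _ _ (by norm_num)
  -- the decomposition of SO(3,q) into two Bruhat cells
  have hset : (Finset.univ.filter
      (fun w : Matrix (Fin 3) (Fin 3) F =>
        w.det ≠ 0 ∧ wᵀ * matJ F * w = matJ F ∧ w.det = 1))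
      = ((Finset.univ.filter (fun t : F => t ≠ 0)) ×ˢ Finset.univ).image
          (fun p : F × F => M1mat F p.1 p.2)
        ∪ ((Finset.univ.filter (fun t : F => t ≠ 0)) ×ˢ (Finset.univ ×ˢ Finset.univ)).image
            (fun p : F × F × F => M2mat F p.1 p.2.1 p.2.2) := by
    ext w
    simp only [Finset.mem_filter, Finset.mem_univ, true_and, Finset.mem_union,
      Finset.mem_image, Finset.mem_product]
    constructor
    · rintro ⟨-, horth, hdet1⟩
      rcases SO3_cases h3 w horth hdet1 with ⟨t, c, ht, rfl⟩ | ⟨t, c, d, ht, rfl⟩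
      · refine Or.inl ⟨(t, c), ?_, rfl⟩
        simpa using ht
      · refine Or.inr ⟨(t, c, d), ?_, rfl⟩
        simpa using ht
    · rintro (⟨⟨t, c⟩, hm, rfl⟩ | ⟨⟨t, c, d⟩, hm, rfl⟩)
      · have ht : t ≠ 0 := by simpa using hm
        exact ⟨by rw [M1_det t c ht]; exact one_ne_zero, M1_orth h3 t c ht, M1_det t c ht⟩
      · have ht : t ≠ 0 := by simpa using hm
        exact ⟨by rw [M2_det t c d ht]; exact one_ne_zero, M2_orth h3 t c d ht, M2_det t c d ht⟩
  have hdisj : Disjoint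
      (((Finset.univ.filter (fun t : F => t ≠ 0)) ×ˢ Finset.univ).image
          (fun p : F × F => M1mat F p.1 p.2))
      (((Finset.univ.filter (fun t : F => t ≠ 0)) ×ˢ (Finset.univ ×ˢ Finset.univ)).image
          (fun p : F × F × F => M2mat F p.1 p.2.1 p.2.2)) := by
    rw [Finset.disjoint_left]
    rintro w hw1 hw2
    obtain ⟨⟨t, c⟩, hp, rfl⟩ := Finset.mem_image.mp hw1
    obtain ⟨⟨t', c', d'⟩, hq, hEq⟩ := Finset.mem_image.mp hw2
    have ht' : t' ≠ 0 := by
      simp only [Finset.mem_product, Finset.mem_filter] at hq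
      exact hq.1.2
    have h10 := congrFun (congrFun hEq 1) 0
    simp only [M1mat, M2mat, Matrix.cons_val', Matrix.cons_val_zero, Matrix.cons_val_one,
      Matrix.head_cons, Matrix.empty_val', Matrix.cons_val_fin_one, Matrix.head_fin_const,
      Matrix.of_apply] at h10
    exact (inv_ne_zero ht') h10
  have hinj1 : ∀ p ∈ (Finset.univ.filter (fun t : F => t ≠ 0)) ×ˢ (Finset.univ : Finset F),
      ∀ q ∈ (Finset.univ.filter (fun t : F => t ≠ 0)) ×ˢ (Finset.univ : Finset F),
      M1mat F p.1 p.2 = M1mat F q.1 q.2 → p = q := by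
    rintro ⟨t, c⟩ - ⟨t', c'⟩ - h
    have h1 := congrFun (congrFun h 0) 0
    have h2 := congrFun (congrFun h 2) 1
    simp only [M1mat, Matrix.cons_val', Matrix.cons_val_zero, Matrix.cons_val_one,
      Matrix.head_cons, Matrix.empty_val', Matrix.cons_val_fin_one, Matrix.head_fin_const,
      Matrix.of_apply, Matrix.cons_val_two, Matrix.tail_cons, neg_inj] at h1 h2
    rw [Prod.mk.injEq]
    exact ⟨h1, h2⟩
  have hinj2 : ∀ p ∈ (Finset.univ.filter (fun t : F => t ≠ 0)) ×ˢ
        ((Finset.univ : Finset F) ×ˢ (Finset.univ : Finset F)),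
      ∀ q ∈ (Finset.univ.filter (fun t : F => t ≠ 0)) ×ˢ
        ((Finset.univ : Finset F) ×ˢ (Finset.univ : Finset F)),
      M2mat F p.1 p.2.1 p.2.2 = M2mat F q.1 q.2.1 q.2.2 → p = q := by
    rintro ⟨t, c, d⟩ hp ⟨t', c', d'⟩ - h
    have htne : t ≠ 0 := by
      simp only [Finset.mem_product, Finset.mem_filter] at hp
      exact hp.1.2
    have h1 := congrFun (congrFun h 1) 0
    have h2 := congrFun (congrFun h 2) 0
    have h4 := congrFun (congrFun h 1) 2
    simp only [M1mat, M2mat, Matrix.cons_val', Matrix.cons_val_zero, Matrix.cons_val_one,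
      Matrix.head_cons, Matrix.empty_val', Matrix.cons_val_fin_one, Matrix.head_fin_const,
      Matrix.of_apply, Matrix.cons_val_two, Matrix.tail_cons, neg_inj] at h1 h2 h4
    have ht : t = t' := inv_injective h1
    rw [← ht] at h4
    have hd : d = d' := mul_left_cancel₀ (inv_ne_zero htne) h4
    rw [Prod.mk.injEq, Prod.mk.injEq]
    exact ⟨ht, h2, hd⟩
  rw [hset, Finset.sum_union hdisj, Finset.sum_image hinj1, Finset.sum_image hinj2]
  -- first cell sum
  have hS1 : ∑ p ∈ (Finset.univ.filter (fun t : F => t ≠ 0)) ×ˢ (Finset.univ : Finset F),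
      canChar F (a * (M1mat F p.1 p.2).trace)
      = canChar F a * (3 ^ r : ℂ) * kloos F (a ^ 2) := by
    rw [Finset.sum_product]
    have hinner : ∀ t ∈ Finset.univ.filter (fun t : F => t ≠ 0),
        (∑ c : F, canChar F (a * (M1mat F t c).trace))
        = (3 ^ r : ℂ) * (canChar F (a * t + a * t⁻¹) * canChar F a) := by
      intro t _
      have hc : ∀ c : F, canChar F (a * (M1mat F t c).trace)
          = canChar F (a * t + a * t⁻¹) * canChar F a := by
        intro c
        rw [M1_trace, show a * (t + t⁻¹ + 1) = (a * t + a * t⁻¹) + a by ring, canChar_add]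
      rw [Finset.sum_congr rfl (fun c _ => hc c), Finset.sum_const, Finset.card_univ, hF,
        nsmul_eq_mul]
      push_cast
      ring
    rw [Finset.sum_congr rfl hinner, ← Finset.mul_sum, ← Finset.sum_mul]
    have hkl : ∑ t ∈ Finset.univ.filter (fun t : F => t ≠ 0), canChar F (a * t + a * t⁻¹)
        = kloos F (a ^ 2) := by
      rw [kloos]
      refine Finset.sum_nbij' (fun t => a * t) (fun α => a⁻¹ * α) ?_ ?_ ?_ ?_ ?_
      · intro t htm
        simp only [Finset.mem_filter, Finset.mem_univ, true_and] at htm ⊢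
        exact mul_ne_zero ha htm
      · intro α hαm
        simp only [Finset.mem_filter, Finset.mem_univ, true_and] at hαm ⊢
        exact mul_ne_zero (inv_ne_zero ha) hαm
      · intro t _
        field_simp
      · intro α _
        field_simp
      · intro t htm
        simp only [Finset.mem_filter, Finset.mem_univ, true_and] at htm
        congr 1
        field_simp
    rw [hkl]
    ring
  -- second cell sum vanishes
  have hS2 : ∑ p ∈ (Finset.univ.filter (fun t : F => t ≠ 0)) ×ˢ
        ((Finset.univ : Finset F) ×ˢ (Finset.univ : Finset F)),
      canChar F (a * (M2mat F p.1 p.2.1 p.2.2).trace) = 0 := by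
    rw [Finset.sum_product]
    have hinner : ∀ t ∈ Finset.univ.filter (fun t : F => t ≠ 0),
        (∑ q ∈ (Finset.univ : Finset F) ×ˢ (Finset.univ : Finset F),
          canChar F (a * (M2mat F t q.1 q.2).trace))
        = (3 ^ r : ℂ) * canChar F (-a) * ∑ c : F, canChar F (a * t * c ^ 2) := by
      intro t htm
      simp only [Finset.mem_filter, Finset.mem_univ, true_and] at htm
      rw [Finset.sum_product_right]
      have hd : ∀ d : F, (∑ c : F, canChar F (a * (M2mat F t c d).trace))
          = canChar F (-a) * ∑ c : F, canChar F (a * t * c ^ 2) := by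
        intro d
        have harg : ∀ c : F, a * (M2mat F t c d).trace
            = a * t * (c + t⁻¹ * d) ^ 2 + (-a) := by
          intro c
          rw [M2_trace]
          field_simp
          ring_nf
          linear_combination (-(t * c * d)) * h3
        have hcc : ∀ c : F, canChar F (a * (M2mat F t c d).trace)
            = canChar F (a * t * (c + t⁻¹ * d) ^ 2) * canChar F (-a) := by
          intro c
          rw [harg c, canChar_add]
        rw [Finset.sum_congr rfl (fun c _ => hcc c), ← Finset.sum_mul]
        have hshift : ∑ c : F, canChar F (a * t * (c + t⁻¹ * d) ^ 2)
            = ∑ c : F, canChar F (a * t * c ^ 2) :=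
          Fintype.sum_equiv (Equiv.addRight (t⁻¹ * d))
            (fun c => canChar F (a * t * (c + t⁻¹ * d) ^ 2))
            (fun c => canChar F (a * t * c ^ 2)) (fun c => rfl)
        rw [hshift]
        ring
      rw [Finset.sum_congr rfl (fun d _ => hd d), Finset.sum_const, Finset.card_univ, hF,
        nsmul_eq_mul]
      push_cast
      ring
    rw [Finset.sum_congr rfl hinner, ← Finset.mul_sum]
    have hswap : ∑ t ∈ Finset.univ.filter (fun t : F => t ≠ 0),
        (∑ c : F, canChar F (a * t * c ^ 2))
        = ∑ c : F, ∑ t ∈ Finset.univ.filter (fun t : F => t ≠ 0),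
            canChar F (a * t * c ^ 2) := Finset.sum_comm
    rw [hswap]
    have hval : ∀ c : F, (∑ t ∈ Finset.univ.filter (fun t : F => t ≠ 0),
        canChar F (a * t * c ^ 2)) = if c = 0 then (3 ^ r : ℂ) - 1 else -1 := by
      intro c
      by_cases hc : c = 0
      · simp only [hc, if_pos]
        have : ∀ t : F, a * t * (0:F) ^ 2 = 0 := fun t => by ring
        rw [Finset.sum_congr rfl (fun t _ => by rw [this t, canChar_zero])]
        rw [Finset.sum_const, nsmul_eq_mul, mul_one]
        have hcard : (Finset.univ.filter (fun t : F => t ≠ 0)).card = 3 ^ r - 1 := by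
          rw [Finset.filter_ne' Finset.univ 0, Finset.card_erase_of_mem (Finset.mem_univ 0),
            Finset.card_univ, hF]
        rw [hcard]
        push_cast [hcard1]
        ring
      · rw [if_neg hc]
        have hb : a * c ^ 2 ≠ 0 := mul_ne_zero ha (pow_ne_zero 2 hc)
        have : ∀ t : F, a * t * c ^ 2 = (a * c ^ 2) * t := fun t => by ring
        rw [Finset.sum_congr rfl (fun t _ => by rw [this t])]
        exact sum_canChar_mul_ne (a * c ^ 2) hb
    rw [Finset.sum_congr rfl (fun c _ => hval c)]
    rw [Finset.sum_ite]
    have hf1 : Finset.univ.filter (fun c : F => c = 0) = {0} := by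
      ext x; simp
    have hf2' : Finset.univ.filter (fun c : F => ¬ c = 0) = Finset.univ.erase 0 := by
      ext x; simp
    have hf2 : (Finset.univ.filter (fun c : F => ¬ c = 0)).card = 3 ^ r - 1 := by
      rw [hf2', Finset.card_erase_of_mem (Finset.mem_univ 0), Finset.card_univ, hF]
    rw [hf1, Finset.sum_singleton, Finset.sum_const, hf2, nsmul_eq_mul]
    push_cast [hcard1]
    ring
  rw [hS1, hS2, add_zero]
end

section
/- Let m be a nonnegative integer and β ∈ F_q. Then ∑_{a∈F_q^*} λ(-aβ)·K(λ;a²)^m = q·δ(m,q;β) - (q-1)^m. -/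
open Finset

/-- `δ(m,q;β)`, the number of m-tuples (α₁,…,α_m) of nonzero elements with
`α₁ + α₁⁻¹ + ⋯ + α_m + α_m⁻¹ = β`.  (For m = 0 this is 1 if β = 0 and 0 otherwise.) -/
def deltaCount (F : Type) [Field F] [Fintype F] [DecidableEq F] (m : ℕ) (β : F) : ℕ :=
  (Finset.univ.filter
    (fun α : Fin m → F => (∀ i, α i ≠ 0) ∧ ∑ i, (α i + (α i)⁻¹) = β)).card

lemma zeta_pow_three : Complex.exp (2 * Real.pi * Complex.I / 3) ^ (3 : ℕ) = 1 := by
  have := (Complex.isPrimitiveRoot_exp 3 (by norm_num)).pow_eq_one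
  simpa using this

/-- The canonical character bundled as an `AddChar`. -/
noncomputable def psiF (F : Type) [Field F] [Fintype F] [Algebra (ZMod 3) F] :
    AddChar F ℂ :=
  (AddChar.zmodChar 3 zeta_pow_three).compAddMonoidHom
    (Algebra.trace (ZMod 3) F).toAddMonoidHom

lemma psiF_apply (F : Type) [Field F] [Fintype F] [Algebra (ZMod 3) F] (x : F) :
    psiF F x = canChar F x := by
  show Complex.exp (2 * Real.pi * Complex.I / 3) ^ (Algebra.trace (ZMod 3) F x).val = _
  rw [← Complex.exp_nat_mul, canChar]
  ring_nf

lemma psiF_map_sum {M : Type*} [CommMonoid M] {A : Type*} [AddCommMonoid A]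
    (ψ : AddChar A M) {ι : Type*} (s : Finset ι) (f : ι → A) :
    ψ (∑ i ∈ s, f i) = ∏ i ∈ s, ψ (f i) := by
  induction s using Finset.cons_induction with
  | empty => simp
  | cons a s ha ih => rw [Finset.sum_cons, Finset.prod_cons, AddChar.map_add_eq_mul, ih]

lemma psiF_ne_one (F : Type) [Field F] [Fintype F] [Algebra (ZMod 3) F] :
    psiF F ≠ 1 := by
  haveI : FiniteDimensional (ZMod 3) F := Module.Finite.of_finite
  obtain ⟨x, hx⟩ := Algebra.trace_surjective (ZMod 3) F 1
  intro h
  have hψ : psiF F x = 1 := by rw [h]; rfl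
  rw [show psiF F x = Complex.exp (2 * Real.pi * Complex.I / 3)
        ^ (Algebra.trace (ZMod 3) F x).val from rfl, hx] at hψ
  have : (1 : ZMod 3).val = 1 := rfl
  rw [this, pow_one] at hψ
  exact ((Complex.isPrimitiveRoot_exp 3 (by norm_num)).ne_one (by norm_num)) hψ

set_option maxHeartbeats 2000000 in
/-- `∑_{a ∈ F_q^*} λ(-aβ)·K(λ;a²)^m = q·δ(m,q;β) - (q-1)^m`, where q = 3^r. -/
theorem moment_identity (r : ℕ) (hr : 0 < r) (F : Type) [Field F] [Fintype F]
    [DecidableEq F] [Algebra (ZMod 3) F] (hF : Fintype.card F = 3 ^ r)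
    (m : ℕ) (β : F) :
    ∑ a ∈ Finset.univ.filter (fun a : F => a ≠ 0),
      canChar F (-a * β) * (kloos F (a ^ 2)) ^ m
      = (3 ^ r : ℂ) * (deltaCount F m β : ℂ) - ((3 ^ r : ℂ) - 1) ^ m := by
  set ψ := psiF F with hψdef
  have hprim : ψ.IsPrimitive := AddChar.IsPrimitive.of_ne_one (psiF_ne_one F)
  set S : Finset F := Finset.univ.filter (fun α : F => α ≠ 0) with hS
  -- Step A : Kloosterman at a² with a ≠ 0
  have stepA : ∀ a : F, a ≠ 0 →
      kloos F (a ^ 2) = ∑ t ∈ S, ψ (a * (t + t⁻¹)) := by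
    intro a ha
    rw [kloos]
    refine Finset.sum_nbij' (fun α => a⁻¹ * α) (fun t => a * t) ?_ ?_ ?_ ?_ ?_
    · intro α hα
      simp only [hS, mem_filter, mem_univ, true_and] at hα ⊢
      exact mul_ne_zero (inv_ne_zero ha) hα
    · intro t ht
      simp only [hS, mem_filter, mem_univ, true_and] at ht ⊢
      exact mul_ne_zero ha ht
    · intro α hα; field_simp
    · intro t ht; field_simp
    · intro α hα
      simp only [hS, mem_filter, mem_univ, true_and] at hα
      rw [← psiF_apply]
      congr 1
      field_simp
  -- Step B : the power of the Kloosterman sum expands over tuples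
  have stepB : ∀ a : F,
      (∑ t ∈ S, ψ (a * (t + t⁻¹))) ^ m
        = ∑ g ∈ Fintype.piFinset (fun _ : Fin m => S),
            ψ (a * ∑ i, (g i + (g i)⁻¹)) := by
    intro a
    have h1 : (∑ t ∈ S, ψ (a * (t + t⁻¹))) ^ m
        = ∏ _i : Fin m, ∑ t ∈ S, ψ (a * (t + t⁻¹)) := by
      rw [Finset.prod_const, Finset.card_univ, Fintype.card_fin]
    rw [h1, Finset.prod_univ_sum]
    refine Finset.sum_congr rfl fun g _ => ?_
    rw [Finset.mul_sum, psiF_map_sum]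
  -- Step D : character sum over nonzero a
  have stepD : ∀ c : F,
      ∑ a ∈ S, ψ (a * c) = (if c = 0 then (Fintype.card F : ℂ) else 0) - 1 := by
    intro c
    have htot := AddChar.sum_mulShift c hprim
    have h0 : ψ ((0 : F) * c) = 1 := by rw [zero_mul, AddChar.map_zero_eq_one]
    have hsplit : ψ ((0 : F) * c) + ∑ a ∈ Finset.univ.erase (0 : F), ψ (a * c)
        = ∑ a : F, ψ (a * c) :=
      Finset.add_sum_erase Finset.univ (fun a => ψ (a * c)) (mem_univ 0)
    have hfe : S = Finset.univ.erase (0 : F) := by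
      rw [hS, Finset.filter_ne']
    rw [hfe]
    rw [h0] at hsplit
    rw [eq_sub_iff_add_eq, add_comm, hsplit, htot]
    split_ifs <;> simp
  -- put things together
  have key : ∑ a ∈ S, canChar F (-a * β) * (kloos F (a ^ 2)) ^ m
      = ∑ g ∈ Fintype.piFinset (fun _ : Fin m => S),
          ((if (∑ i, (g i + (g i)⁻¹)) - β = 0 then (Fintype.card F : ℂ) else 0) - 1) :=
    calc ∑ a ∈ S, canChar F (-a * β) * (kloos F (a ^ 2)) ^ m
        = ∑ a ∈ S, ∑ g ∈ Fintype.piFinset (fun _ : Fin m => S),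
            ψ (a * ((∑ i, (g i + (g i)⁻¹)) - β)) := by
          refine Finset.sum_congr rfl fun a ha => ?_
          have ha' : a ≠ 0 := by simpa [hS] using ha
          rw [stepA a ha', stepB a, ← psiF_apply, Finset.mul_sum]
          refine Finset.sum_congr rfl fun g _ => ?_
          rw [← AddChar.map_add_eq_mul]
          congr 1
          ring
      _ = ∑ g ∈ Fintype.piFinset (fun _ : Fin m => S), ∑ a ∈ S,
            ψ (a * ((∑ i, (g i + (g i)⁻¹)) - β)) := Finset.sum_comm
      _ = _ := Finset.sum_congr rfl fun g _ => stepD _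
  rw [key, Finset.sum_sub_distrib, Finset.sum_const, nsmul_eq_mul, mul_one]
  have hcard : (Fintype.piFinset (fun _ : Fin m => S)).card = (3 ^ r - 1) ^ m := by
    rw [Fintype.card_piFinset]
    have : S.card = 3 ^ r - 1 := by
      rw [hS, Finset.filter_ne', Finset.card_erase_of_mem (mem_univ _),
        Finset.card_univ, hF]
    simp [this]
  have hpi : Fintype.piFinset (fun _ : Fin m => S)
      = Finset.univ.filter (fun g : Fin m → F => ∀ i, g i ≠ 0) := by
    ext g
    simp [hS, Fintype.mem_piFinset]
  have hsum_ite : ∑ g ∈ Fintype.piFinset (fun _ : Fin m => S),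
      (if (∑ i, (g i + (g i)⁻¹)) - β = 0 then (Fintype.card F : ℂ) else 0)
      = (Fintype.card F : ℂ) * (deltaCount F m β : ℂ) := by
    rw [← Finset.sum_filter, Finset.sum_const, nsmul_eq_mul, mul_comm]
    congr 2
    rw [hpi, Finset.filter_filter, deltaCount]
    congr 1
    ext g
    simp [sub_eq_zero]
  rw [hsum_ite, hcard, hF]
  have h1le : (1 : ℕ) ≤ 3 ^ r := Nat.one_le_pow _ _ (by norm_num)
  push_cast [Nat.cast_sub h1le]
  ring
end

section
/- The matrix trace maps Tr : SO(3,q) → F_q and Tr : O(3,q) → F_q are surjective; that is, for every β ∈ F_q there exists w ∈ SO(3,q) with Tr(w) = β, and there exists w ∈ O(3,q) with Tr(w) = β. -/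
open Matrix

lemma sym2_witness (F : Type) [Field F] (h3 : (3:F) = 0) (p q r s : F)
    (hd : p*s - q*r ≠ 0) :
    ∃ w : Matrix (Fin 3) (Fin 3) F,
      w.det ≠ 0 ∧ wᵀ * matJ F * w = matJ F ∧ w.det = 1 ∧
      w.trace = (p+s)^2 * (p*s - q*r)⁻¹ - 1 := by
  set d : F := p*s - q*r with hdef
  set M : Matrix (Fin 3) (Fin 3) F :=
    !![p^2, q^2, p*q; r^2, s^2, r*s; 2*p*r, 2*q*s, p*s+q*r] with hM
  have hdetM : M.det = d^3 := by
    rw [det_fin_three]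
    simp only [hM, of_apply, cons_val', cons_val_zero, cons_val_one, head_cons,
      empty_val', cons_val_fin_one, head_fin_const, cons_val_two, tail_cons]
    rw [hdef]; ring
  have htrM : M.trace = (p+s)^2 - d := by
    rw [trace_fin_three]
    simp only [hM, of_apply, cons_val', cons_val_zero, cons_val_one, head_cons,
      empty_val', cons_val_fin_one, head_fin_const, cons_val_two, tail_cons]
    rw [hdef]; ring
  have hdet : (d⁻¹ • M).det = 1 := by
    rw [det_smul, hdetM]
    simp only [Fintype.card_fin]
    rw [show (d⁻¹)^3 * d^3 = (d⁻¹*d)^3 by ring, inv_mul_cancel₀ hd, one_pow]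
  refine ⟨d⁻¹ • M, by rw [hdet]; exact one_ne_zero, ?_, hdet, ?_⟩
  · have key : Mᵀ * matJ F * M = (d*d) • matJ F := by
      ext i j
      fin_cases i <;> fin_cases j <;>
        · simp [hM, matJ, mul_apply, Fin.sum_univ_succ, transpose_apply, hdef,
            Matrix.vecHead, Matrix.vecTail]
          first
          | ring1
          | linear_combination (2*p^2*r^2) * h3
          | linear_combination (2*p*q*r*s) * h3
          | linear_combination (p*q*r^2 + p^2*r*s) * h3
          | linear_combination (2*q^2*s^2) * h3
          | linear_combination (q^2*r*s + p*q*s^2) * h3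
    calc (d⁻¹ • M)ᵀ * matJ F * (d⁻¹ • M)
        = (d⁻¹ * d⁻¹) • (Mᵀ * matJ F * M) := by
          rw [transpose_smul, Matrix.smul_mul, Matrix.smul_mul, Matrix.mul_smul, smul_smul]
      _ = matJ F := by
          rw [key, smul_smul,
            show d⁻¹ * d⁻¹ * (d*d) = (d⁻¹*d) * (d⁻¹*d) by ring, inv_mul_cancel₀ hd]
          simp
  · rw [trace_smul, htrM, smul_eq_mul]
    field_simp

/-- The trace maps `Tr : SO(3,q) → F_q` and `Tr : O(3,q) → F_q` are surjective,
where q = 3^r. -/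
theorem trace_surjective_SO3_O3 (r : ℕ) (hr : 0 < r) (F : Type) [Field F] [Fintype F]
    [DecidableEq F] (hF : Fintype.card F = 3 ^ r) (β : F) :
    (∃ w : Matrix (Fin 3) (Fin 3) F,
      w.det ≠ 0 ∧ wᵀ * matJ F * w = matJ F ∧ w.det = 1 ∧ w.trace = β) ∧
    (∃ w : Matrix (Fin 3) (Fin 3) F,
      w.det ≠ 0 ∧ wᵀ * matJ F * w = matJ F ∧ w.trace = β) := by
  have h3 : (3:F) = 0 := by
    have := FiniteField.cast_card_eq_zero F
    rw [hF] at this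
    push_cast at this
    exact pow_eq_zero_iff hr.ne' |>.mp this
  have main : ∃ w : Matrix (Fin 3) (Fin 3) F,
      w.det ≠ 0 ∧ wᵀ * matJ F * w = matJ F ∧ w.det = 1 ∧ w.trace = β := by
    by_cases hβ : β + 1 = 0
    · obtain ⟨w, h1, h2, h3', h4⟩ := sym2_witness F h3 1 0 0 (-1) (by
        simp)
      refine ⟨w, h1, h2, h3', ?_⟩
      rw [h4, eq_neg_of_add_eq_zero_left hβ]
      norm_num
    · obtain ⟨w, h1, h2, h3', h4⟩ := sym2_witness F h3 1 1 (-(β+1)⁻¹) 0 (by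
        simp [hβ])
      refine ⟨w, h1, h2, h3', ?_⟩
      rw [h4]
      rw [show (1:F)*0 - 1*(-(β+1)⁻¹) = (β+1)⁻¹ by ring, inv_inv]
      ring
  exact ⟨main, main.imp fun w ⟨a, b, c, e⟩ => ⟨a, b, e⟩⟩
end

section
/- For G equal to either SO(3,q) or O(3,q), the map F_q → F_3^G sending a to the tuple c(a) = (tr(a·Tr g))_{g∈G} is an injective F_3-linear map (hence an F_3-linear isomorphism of F_q onto its image, the dual code C(G)^⊥). -/
open Matrix

/-- Auxiliary integral matrix; `(1-a)⁻¹ • Mmat F a` lies in SO(3,q) when `a ≠ 1`. -/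
def Mmat (F : Type) [Field F] (a : F) : Matrix (Fin 3) (Fin 3) F :=
  !![1, a^2, a; 1, 1, 1; -1, -a, 1+a]

lemma Mmat_transpose (F : Type) [Field F] (a : F) :
    (Mmat F a)ᵀ = !![1, 1, -1; a^2, 1, -a; a, 1, 1+a] := by
  ext i j; fin_cases i <;> fin_cases j <;> rfl

lemma Mmat_orth (F : Type) [Field F] (h3 : (3:F) = 0) (a : F) :
    (Mmat F a)ᵀ * matJ F * Mmat F a = ((1-a)^2) • matJ F := by
  rw [Mmat_transpose]
  ext i j
  fin_cases i <;> fin_cases j <;>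
    simp [Mmat, matJ, Matrix.mul_apply, Matrix.smul_apply, smul_eq_mul,
      Matrix.vecHead, Matrix.vecTail, Fin.sum_univ_three]
  all_goals (first | ring1 | linear_combination h3 | linear_combination a * h3 | linear_combination (-a) * h3 | linear_combination a^2 * h3 | linear_combination (2*a) * h3 | linear_combination (a - a^2) * h3 | linear_combination (2*a - a^2) * h3 | linear_combination (a^2 - 2*a) * h3)

lemma Mmat_det (F : Type) [Field F] (h3 : (3:F) = 0) (a : F) :
    (Mmat F a).det = (1-a)^3 := by
  simp [Mmat, Matrix.det_fin_three]
  linear_combination (2*a - 2*a^2) * h3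

lemma Mmat_trace (F : Type) [Field F] (h3 : (3:F) = 0) (a : F) :
    (Mmat F a).trace = a := by
  simp [Mmat, Matrix.trace_fin_three]
  linear_combination h3

/-- The special element of SO(3,q) of trace `-1`. -/
def Vmat (F : Type) [Field F] : Matrix (Fin 3) (Fin 3) F := !![0,1,0; 1,0,0; 0,0,-1]

lemma Vmat_orth (F : Type) [Field F] : (Vmat F)ᵀ * matJ F * Vmat F = matJ F := by
  ext i j
  fin_cases i <;> fin_cases j <;>
    simp [Vmat, matJ, Matrix.mul_apply, Matrix.transpose_apply,
      Matrix.vecHead, Matrix.vecTail, Fin.sum_univ_three]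

lemma Vmat_det (F : Type) [Field F] : (Vmat F).det = 1 := by
  simp [Vmat, Matrix.det_fin_three]

lemma Vmat_trace (F : Type) [Field F] : (Vmat F).trace = -1 := by
  simp [Vmat, Matrix.trace_fin_three]

/-- Every element of `F` is the trace of an element of SO(3,q). -/
lemma exists_so3_trace (F : Type) [Field F] (h3 : (3:F) = 0) (x : F) :
    ∃ w : Matrix (Fin 3) (Fin 3) F,
      (w.det ≠ 0 ∧ wᵀ * matJ F * w = matJ F ∧ w.det = 1) ∧ w.trace = x := by
  by_cases hx : x = -1
  · exact ⟨Vmat F, ⟨by rw [Vmat_det]; exact one_ne_zero, Vmat_orth F, Vmat_det F⟩,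
      by rw [Vmat_trace, hx]⟩
  · have h1x : (1 : F) + x ≠ 0 := fun h => hx (by linear_combination h)
    set a : F := x * (1+x)⁻¹ with ha
    have hinv : (1 : F) - a = (1+x)⁻¹ := by
      rw [ha]
      field_simp
      ring
    have hc : (1 : F) - a ≠ 0 := by
      rw [hinv]
      exact inv_ne_zero h1x
    have hdet : ((1-a)⁻¹)^3 * ((1:F)-a)^3 = 1 := by
      rw [← mul_pow, inv_mul_cancel₀ hc, one_pow]
    refine ⟨(1-a)⁻¹ • Mmat F a, ⟨?_, ?_, ?_⟩, ?_⟩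
    · rw [Matrix.det_smul, Mmat_det F h3]
      simp only [Fintype.card_fin]
      rw [hdet]
      exact one_ne_zero
    · rw [Matrix.transpose_smul, Matrix.smul_mul, Matrix.mul_smul, Matrix.smul_mul,
        Mmat_orth F h3, smul_smul, smul_smul]
      rw [show (1-a)⁻¹ * (1-a)⁻¹ * ((1:F)-a)^2 = 1 by field_simp, one_smul]
    · rw [Matrix.det_smul, Mmat_det F h3]
      simp only [Fintype.card_fin]
      exact hdet
    · rw [Matrix.trace_smul, Mmat_trace F h3, smul_eq_mul, hinv, inv_inv, ha,
        mul_comm x ((1+x)⁻¹), ← mul_assoc, mul_inv_cancel₀ h1x, one_mul]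

/-- Nondegeneracy of the trace pairing for a finite field over `ZMod 3`. -/
lemma trace_pairing_nondeg (F : Type) [Field F] [Fintype F] [Algebra (ZMod 3) F]
    (a : F) (h : ∀ x : F, Algebra.trace (ZMod 3) F (a * x) = 0) : a = 0 := by
  by_contra ha
  have htr : Algebra.trace (ZMod 3) F = 0 := by
    ext y
    have := h (a⁻¹ * y)
    rwa [← mul_assoc, mul_inv_cancel₀ ha, one_mul] at this
  exact Algebra.trace_ne_zero (ZMod 3) F htr

/-- For G = SO(3,q) and G = O(3,q), the map sending a ∈ F_q to the tuple
`(tr(a·Tr g))_{g ∈ G} ∈ F_3^G` is an injective F_3-linear map, where q = 3^r and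
tr : F_q → F_3 is the absolute trace. -/
theorem dual_code_iso (r : ℕ) (hr : 0 < r) (F : Type) [Field F] [Fintype F]
    [DecidableEq F] [Algebra (ZMod 3) F] (hF : Fintype.card F = 3 ^ r) :
    (IsLinearMap (ZMod 3)
        (fun (a : F)
          (g : {w : Matrix (Fin 3) (Fin 3) F //
                  w.det ≠ 0 ∧ wᵀ * matJ F * w = matJ F ∧ w.det = 1}) =>
          Algebra.trace (ZMod 3) F (a * g.val.trace)) ∧
      Function.Injective
        (fun (a : F)
          (g : {w : Matrix (Fin 3) (Fin 3) F //
                  w.det ≠ 0 ∧ wᵀ * matJ F * w = matJ F ∧ w.det = 1}) =>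
          Algebra.trace (ZMod 3) F (a * g.val.trace))) ∧
    (IsLinearMap (ZMod 3)
        (fun (a : F)
          (g : {w : Matrix (Fin 3) (Fin 3) F //
                  w.det ≠ 0 ∧ wᵀ * matJ F * w = matJ F}) =>
          Algebra.trace (ZMod 3) F (a * g.val.trace)) ∧
      Function.Injective
        (fun (a : F)
          (g : {w : Matrix (Fin 3) (Fin 3) F //
                  w.det ≠ 0 ∧ wᵀ * matJ F * w = matJ F}) =>
          Algebra.trace (ZMod 3) F (a * g.val.trace))) := by
  have h3 : (3 : F) = 0 := by
    rw [show (3:F) = ((3:ℕ):F) by norm_num, ← map_natCast (algebraMap (ZMod 3) F) 3,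
      show ((3:ℕ) : ZMod 3) = 0 by decide, map_zero]
  refine ⟨⟨?_, ?_⟩, ⟨?_, ?_⟩⟩
  · constructor
    · intro a b
      funext g
      simp only [Pi.add_apply]
      rw [add_mul, map_add]
    · intro c a
      funext g
      simp only [Pi.smul_apply]
      rw [smul_mul_assoc, _root_.map_smul]
  · intro a b hab
    have key : ∀ x : F, Algebra.trace (ZMod 3) F ((a - b) * x) = 0 := by
      intro x
      obtain ⟨w, hw, hwt⟩ := exists_so3_trace F h3 x
      have h2 := congrFun hab ⟨w, hw⟩
      simp only at h2
      rw [sub_mul, map_sub, ← hwt, h2, sub_self]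
    exact sub_eq_zero.mp (trace_pairing_nondeg F (a - b) key)
  · constructor
    · intro a b
      funext g
      simp only [Pi.add_apply]
      rw [add_mul, map_add]
    · intro c a
      funext g
      simp only [Pi.smul_apply]
      rw [smul_mul_assoc, _root_.map_smul]
  · intro a b hab
    have key : ∀ x : F, Algebra.trace (ZMod 3) F ((a - b) * x) = 0 := by
      intro x
      obtain ⟨w, hw, hwt⟩ := exists_so3_trace F h3 x
      have h2 := congrFun hab ⟨w, hw.1, hw.2.1⟩
      simp only at h2
      rw [sub_mul, map_sub, ← hwt, h2, sub_self]
    exact sub_eq_zero.mp (trace_pairing_nondeg F (a - b) key)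
end

section
/- Let a ∈ F_q^*. Then the Hamming weight of the codeword c₁(a) = (tr(a·Tr g))_{g∈SO(3,q)}, i.e. the number of g ∈ SO(3,q) with tr(a·Tr g) ≠ 0, equals (2q/3)·(q² - 1 - Re(λ(a))·K(λ;a²)). -/
open Finset Matrix

set_option linter.unusedVariables false
set_option linter.unusedTactic false
set_option linter.unreachableTactic false
set_option linter.unnecessarySeqFocus false
set_option maxHeartbeats 1000000

noncomputable def omg : ℂ := Complex.exp (2 * Real.pi * Complex.I / 3)

lemma omg_prim : IsPrimitiveRoot omg 3 := by
  have := Complex.isPrimitiveRoot_exp 3 (by norm_num)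
  simpa [omg] using this

lemma omg_sum : 1 + omg + omg^2 = 0 := by
  have h := omg_prim.geom_sum_eq_zero (by norm_num)
  calc 1 + omg + omg^2 = ∑ i ∈ Finset.range 3, omg ^ i := by
        rw [Finset.sum_range_succ, Finset.sum_range_succ, Finset.sum_range_one]; ring
    _ = 0 := h

lemma omg_re : (omg.re : ℂ) = -(1/2) := by
  have harg : (2 * ↑Real.pi * Complex.I / 3 : ℂ) = ((2 * Real.pi / 3 : ℝ) : ℂ) * Complex.I := by
    push_cast; ring
  have : omg.re = Real.cos (2 * Real.pi / 3) := by
    rw [omg, harg, Complex.exp_ofReal_mul_I_re]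
  rw [this]
  have h23 : (2 * Real.pi / 3 : ℝ) = Real.pi - Real.pi / 3 := by ring
  rw [h23, Real.cos_pi_sub, Real.cos_pi_div_three]
  norm_num

lemma omg_sq_re : ((omg^2).re : ℂ) = -(1/2) := by
  have h2 : omg^2 = -1 - omg := by linear_combination omg_sum
  rw [h2]
  simp only [Complex.sub_re, Complex.neg_re, Complex.one_re]
  push_cast
  rw [show ((omg.re : ℂ)) = -(1/2) from omg_re]
  ring

lemma canChar_eq (F : Type) [Field F] [Fintype F] [Algebra (ZMod 3) F] (x : F) :
    canChar F x = omg ^ (Algebra.trace (ZMod 3) F x).val := by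
  rw [canChar, omg, ← Complex.exp_nat_mul]
  congr 1
  ring

section MatPart


variable {F : Type} [Field F]

lemma transpose_fin_three' {α : Type*} (a b c d e f g h i : α) :
    !![a,b,c;d,e,f;g,h,i]ᵀ = !![a,d,g;b,e,h;c,f,i] := by
  ext x y; fin_cases x <;> fin_cases y <;> rfl

def pmat (α f : F) : Matrix (Fin 3) (Fin 3) F :=
  !![α, f^2*α, -(α*f); 0, α⁻¹, 0; 0, f, 1]

def bmat (α f h : F) : Matrix (Fin 3) (Fin 3) F :=
  !![f^2*α, α*(1+f^2*h^2+f*h), α*f*(1-f*h);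
     α⁻¹, α⁻¹*h^2, -(α⁻¹*h);
     f, f*h^2-h, -(f*h)-1]

def sigm (F : Type) [Field F] : Matrix (Fin 3) (Fin 3) F := !![0,1,0; 1,0,0; 0,0,-1]

lemma memSO_mul {w v : Matrix (Fin 3) (Fin 3) F}
    (hw : wᵀ * matJ F * w = matJ F) (hv : vᵀ * matJ F * v = matJ F) :
    (w*v)ᵀ * matJ F * (w*v) = matJ F := by
  rw [Matrix.transpose_mul]
  have : vᵀ * wᵀ * matJ F * (w * v) = vᵀ * (wᵀ * matJ F * w) * v := by
    simp only [Matrix.mul_assoc]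
  rw [this, hw, Matrix.mul_assoc] at *
  exact hv

lemma memSO_pmat (h3 : (3:F) = 0) {α : F} (hα : α ≠ 0) (f : F) :
    (pmat α f)ᵀ * matJ F * pmat α f = matJ F := by
  rw [pmat, matJ, transpose_fin_three', Matrix.mul_fin_three, Matrix.mul_fin_three]
  ext i j
  fin_cases i <;> fin_cases j <;> (try simp [Matrix.vecHead, Matrix.vecTail]) <;> (try field_simp) <;>
    first
    | rfl
    | ring1
    | linear_combination f^2 * h3
    | linear_combination f^2 * α^2 * h3
    | linear_combination α * f^2 * h3

lemma memSO_sigm : (sigm F)ᵀ * matJ F * sigm F = matJ F := by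
  rw [sigm, matJ, transpose_fin_three', Matrix.mul_fin_three, Matrix.mul_fin_three]
  ext i j; fin_cases i <;> fin_cases j <;> simp [Matrix.vecHead, Matrix.vecTail]

lemma det_pmat {α : F} (hα : α ≠ 0) (f : F) : (pmat α f).det = 1 := by
  simp [pmat, Matrix.det_fin_three, Matrix.vecHead, Matrix.vecTail]
  field_simp

lemma det_sigm : (sigm F).det = 1 := by
  simp [sigm, Matrix.det_fin_three]

lemma trace_pmat (α f : F) : (pmat α f).trace = α + α⁻¹ + 1 := by
  simp [pmat, Matrix.trace_fin_three]

lemma trace_bmat (α f h : F) : (bmat α f h).trace = f^2*α + α⁻¹*h^2 - f*h - 1 := by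
  simp [bmat, Matrix.trace_fin_three]; ring

def qmat (α f : F) : Matrix (Fin 3) (Fin 3) F := pmat α⁻¹ (-(f*α))

lemma pmat_mul_qmat (h3 : (3:F) = 0) {α : F} (hα : α ≠ 0) (f : F) :
    pmat α f * qmat α f = 1 := by
  rw [pmat, qmat, pmat, Matrix.mul_fin_three, Matrix.one_fin_three]
  ext i j
  fin_cases i <;> fin_cases j <;> (try simp [Matrix.vecHead, Matrix.vecTail]) <;>
    (try field_simp) <;>
    first
    | rfl
    | ring1
    | linear_combination f^2 * h3
    | linear_combination f^2 * α^2 * h3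
    | linear_combination α * f^2 * h3
    | linear_combination f * α * h3
    | linear_combination f * h3

lemma sigm_mul_sigm : sigm F * sigm F = 1 := by
  rw [sigm, Matrix.mul_fin_three, Matrix.one_fin_three]
  ext i j; fin_cases i <;> fin_cases j <;> simp [Matrix.vecHead, Matrix.vecTail]

lemma bmat_eq (h3 : (3:F) = 0) {α : F} (hα : α ≠ 0) (f h : F) :
    pmat α f * (sigm F * pmat 1 h) = bmat α f h := by
  rw [pmat, sigm, pmat, bmat, Matrix.mul_fin_three, Matrix.mul_fin_three]
  ext i j
  fin_cases i <;> fin_cases j <;> (try simp [Matrix.vecHead, Matrix.vecTail]) <;> (try field_simp) <;>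
    first
    | rfl
    | ring1
    | linear_combination f^2 * h3
    | linear_combination f^2 * α^2 * h3
    | linear_combination α * f^2 * h * h3
    | linear_combination α * f * h3
    | linear_combination α * f^2 * h^2 * h3


end MatPart

lemma caseA {F : Type} [Field F] (h3 : (3:F) = 0) {w : Matrix (Fin 3) (Fin 3) F}
    (hw : wᵀ * matJ F * w = matJ F) (hd : w.det = 1) (hz : w 1 0 = 0) :
    w 0 0 ≠ 0 ∧ w = pmat (w 0 0) (w 2 1) := by
  have e00 := congrFun (congrFun hw 0) 0
  have e01 := congrFun (congrFun hw 0) 1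
  have e02 := congrFun (congrFun hw 0) 2
  have e11 := congrFun (congrFun hw 1) 1
  have e12 := congrFun (congrFun hw 1) 2
  have e22 := congrFun (congrFun hw 2) 2
  simp [matJ, Matrix.mul_apply, Fin.sum_univ_three] at e00 e01 e02 e11 e12 e22
  rw [hz] at e00 e01 e02
  have h20 : w 2 0 = 0 := by
    have : w 2 0 * w 2 0 = 0 := by linear_combination e00
    exact mul_self_eq_zero.mp this
  rw [h20] at e01 e02
  have e01' : w 0 0 * w 1 1 = 1 := by linear_combination e01
  have hne : w 0 0 ≠ 0 := left_ne_zero_of_mul (e01'.symm ▸ one_ne_zero)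
  have h11 : w 1 1 = (w 0 0)⁻¹ := (inv_eq_of_mul_eq_one_right e01').symm
  have h12 : w 1 2 = 0 := by
    have : w 0 0 * w 1 2 = 0 := by linear_combination e02
    exact (mul_eq_zero.mp this).resolve_left hne
  rw [Matrix.det_fin_three, hz, h20, h12] at hd
  have h22 : w 2 2 = 1 := by linear_combination hd - w 2 2 * e01'
  have h01 : w 0 1 = (w 2 1)^2 * w 0 0 := by
    linear_combination (-(w 0 0)) * e11 + 2 * w 0 1 * e01' + w 0 1 * h3
  have h02 : w 0 2 = -(w 0 0 * w 2 1) := by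
    linear_combination w 0 0 * e12 - w 0 2 * e01' - w 0 0 * w 0 1 * h12 - w 0 0 * w 2 1 * h22
  refine ⟨hne, ?_⟩
  ext i j
  fin_cases i <;> fin_cases j <;>
    simp [pmat, Matrix.vecHead, Matrix.vecTail, hz, h20, h01, h02, h11, h12, h22]

lemma charSO {F : Type} [Field F] (h3 : (3:F) = 0) {w : Matrix (Fin 3) (Fin 3) F} :
    (wᵀ * matJ F * w = matJ F ∧ w.det = 1) ↔
      ((∃ α f : F, α ≠ 0 ∧ w = pmat α f) ∨ (∃ α f h : F, α ≠ 0 ∧ w = bmat α f h)) := by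
  constructor
  · rintro ⟨hw, hd⟩
    by_cases hz : w 1 0 = 0
    · obtain ⟨hne, hform⟩ := caseA h3 hw hd hz
      exact Or.inl ⟨w 0 0, w 2 1, hne, hform⟩
    · set α := (w 1 0)⁻¹ with hαdef
      set f := w 2 0 with hfdef
      have hα : α ≠ 0 := inv_ne_zero hz
      have e00 := congrFun (congrFun hw 0) 0
      simp [matJ, Matrix.mul_apply, Fin.sum_univ_three] at e00
      have hw00 : w 0 0 = f^2 * α := by
        rw [hfdef, hαdef]
        rw [eq_comm, mul_comm, inv_mul_eq_iff_eq_mul₀ hz, eq_comm]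
        linear_combination (-1 : F) * e00 + w 1 0 * w 0 0 * h3
      have hq : (qmat α f)ᵀ * matJ F * qmat α f = matJ F :=
        memSO_pmat h3 (inv_ne_zero hα) _
      set v := sigm F * (qmat α f * w) with hvdef
      have hv : vᵀ * matJ F * v = matJ F :=
        memSO_mul memSO_sigm (memSO_mul hq hw)
      have hvd : v.det = 1 := by
        rw [hvdef, Matrix.det_mul, Matrix.det_mul, det_sigm, qmat,
          det_pmat (inv_ne_zero hα), hd]
        ring
      have hw10 : w 1 0 = α⁻¹ := by rw [hαdef, inv_inv]
      have hv10 : v 1 0 = 0 := by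
        rw [hvdef]
        simp only [Matrix.mul_apply, Fin.sum_univ_three]
        simp [sigm, qmat, pmat, Matrix.vecHead, Matrix.vecTail]
        rw [hw00, hw10, ← hfdef]
        field_simp
        first
        | linear_combination f^2 * h3
        | linear_combination f^2 * α * h3
        | linear_combination f^2 * α^2 * h3
        | linear_combination f^2 * α^3 * h3
      have hv20 : v 2 0 = 0 := by
        rw [hvdef]
        simp only [Matrix.mul_apply, Fin.sum_univ_three]
        simp [sigm, qmat, pmat, Matrix.vecHead, Matrix.vecTail]
        rw [hw10, ← hfdef]
        field_simp
        ring
      have hv00 : v 0 0 = 1 := by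
        rw [hvdef]
        simp only [Matrix.mul_apply, Fin.sum_univ_three]
        simp [sigm, qmat, pmat, Matrix.vecHead, Matrix.vecTail]
        rw [hw10]
        field_simp
      obtain ⟨-, hvform⟩ := caseA h3 hv hvd hv10
      rw [hv00] at hvform
      have hrec : w = pmat α f * (sigm F * v) := by
        rw [hvdef, ← Matrix.mul_assoc (sigm F), sigm_mul_sigm, Matrix.one_mul,
          ← Matrix.mul_assoc, pmat_mul_qmat h3 hα, Matrix.one_mul]
      rw [hvform] at hrec
      rw [bmat_eq h3 hα] at hrec
      exact Or.inr ⟨α, f, v 2 1, hα, hrec⟩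
  · rintro (⟨α, f, hα, rfl⟩ | ⟨α, f, h, hα, rfl⟩)
    · exact ⟨memSO_pmat h3 hα f, det_pmat hα f⟩
    · rw [← bmat_eq h3 hα]
      refine ⟨memSO_mul (memSO_pmat h3 hα f) (memSO_mul memSO_sigm (memSO_pmat h3 one_ne_zero h)), ?_⟩
      rw [Matrix.det_mul, Matrix.det_mul, det_sigm, det_pmat hα, det_pmat one_ne_zero]
      ring

section Tr
variable (F : Type) [Field F] [Fintype F] [DecidableEq F] [Algebra (ZMod 3) F]

lemma trace_fiber_card (c : ZMod 3) :
    (univ.filter fun x : F => Algebra.trace (ZMod 3) F x = c).card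
      = (univ.filter fun x : F => Algebra.trace (ZMod 3) F x = 0).card := by
  have : FiniteDimensional (ZMod 3) F := Module.Finite.of_basis (Module.finBasis _ _)
  obtain ⟨y, hy⟩ := Algebra.trace_surjective (ZMod 3) F c
  refine Finset.card_nbij' (fun x => x - y) (fun x => x + y) ?_ ?_ ?_ ?_
  · intro x hx
    simp only [Finset.mem_coe, mem_filter, mem_univ, true_and] at hx ⊢
    rw [map_sub, hx, hy, sub_self]
  · intro x hx
    simp only [Finset.mem_coe, mem_filter, mem_univ, true_and] at hx ⊢
    rw [map_add, hx, hy, zero_add]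
  · intro x _; simp
  · intro x _; simp

lemma three_mul_fiber :
    3 * (univ.filter fun x : F => Algebra.trace (ZMod 3) F x = 0).card = Fintype.card F := by
  have hcard := Finset.card_eq_sum_card_fiberwise
    (f := fun x : F => Algebra.trace (ZMod 3) F x) (s := univ) (t := univ)
    (fun x _ => mem_univ _)
  have huniv : (univ : Finset (ZMod 3)) = {0, 1, 2} := by decide
  rw [huniv] at hcard
  rw [Finset.sum_insert (by decide), Finset.sum_insert (by decide), Finset.sum_singleton] at hcard
  rw [trace_fiber_card F 1, trace_fiber_card F 2] at hcard
  rw [← Finset.card_univ, hcard]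
  ring

end Tr

section Count
variable {F : Type} [Field F] [Fintype F] [DecidableEq F] [Algebra (ZMod 3) F]

-- abbreviation
local notation "tr" => Algebra.trace (ZMod 3) F

lemma filter_ne_zero_card : (univ.filter fun x : F => x ≠ 0).card + 1 = Fintype.card F := by
  have h : (univ.filter fun x : F => x ≠ 0) = univ.erase 0 := by
    ext x; simp [Finset.mem_erase]
  rw [h, ← Finset.card_univ]
  have h0 : (0:F) ∈ (univ : Finset F) := mem_univ _
  rw [Finset.card_erase_of_mem h0]
  have : 0 < (univ : Finset F).card := Finset.card_pos.mpr ⟨0, h0⟩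
  omega

-- N2
lemma A_add_n (a : F) :
    (univ.filter fun α : F => α ≠ 0 ∧ tr (a*(α+α⁻¹+1)) ≠ 0).card
      + (univ.filter fun α : F => α ≠ 0 ∧ tr (a*α+a*α⁻¹) = -(tr a)).card
      = (univ.filter fun x : F => x ≠ 0).card := by
  have hA : (univ.filter fun α : F => α ≠ 0 ∧ tr (a*(α+α⁻¹+1)) ≠ 0)
      = (univ.filter fun x : F => x ≠ 0).filter
          (fun α => ¬(tr (a*α+a*α⁻¹) = -(tr a))) := by
    rw [Finset.filter_filter]
    apply Finset.filter_congr
    intro α _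
    have hx : a*(α+α⁻¹+1) = (a*α+a*α⁻¹) + a := by ring
    rw [hx, map_add]
    constructor
    · rintro ⟨h1, h2⟩; exact ⟨h1, fun he => h2 (by rw [he]; ring)⟩
    · rintro ⟨h1, h2⟩; refine ⟨h1, fun he => h2 ?_⟩; linear_combination he
  have hn : (univ.filter fun α : F => α ≠ 0 ∧ tr (a*α+a*α⁻¹) = -(tr a))
      = (univ.filter fun x : F => x ≠ 0).filter
          (fun α => tr (a*α+a*α⁻¹) = -(tr a)) := by
    rw [Finset.filter_filter]
  rw [hA, hn, add_comm]
  exact Finset.card_filter_add_card_filter_not _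

-- N3
lemma n_partition (a : F) :
    (univ.filter fun α : F => α ≠ 0 ∧ tr (a*α+a*α⁻¹) = 0).card
      + (univ.filter fun α : F => α ≠ 0 ∧ tr (a*α+a*α⁻¹) = 1).card
      + (univ.filter fun α : F => α ≠ 0 ∧ tr (a*α+a*α⁻¹) = 2).card
      = (univ.filter fun x : F => x ≠ 0).card := by
  have hcard := Finset.card_eq_sum_card_fiberwise
    (f := fun α : F => tr (a*α+a*α⁻¹)) (s := univ.filter fun x : F => x ≠ 0)
    (t := univ) (fun x _ => mem_univ _)
  have huniv : (univ : Finset (ZMod 3)) = {0, 1, 2} := by decide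
  rw [huniv, Finset.sum_insert (by decide), Finset.sum_insert (by decide),
    Finset.sum_singleton] at hcard
  simp only [Finset.filter_filter] at hcard
  omega

-- N4
lemma n_one_eq_two (a : F) :
    (univ.filter fun α : F => α ≠ 0 ∧ tr (a*α+a*α⁻¹) = 1).card
      = (univ.filter fun α : F => α ≠ 0 ∧ tr (a*α+a*α⁻¹) = 2).card := by
  refine Finset.card_nbij' (fun x => -x) (fun x => -x) ?_ ?_ ?_ ?_
  · intro x hx
    simp only [Finset.mem_coe, mem_filter, mem_univ, true_and] at hx ⊢
    refine ⟨neg_ne_zero.mpr hx.1, ?_⟩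
    have : a * -x + a * (-x)⁻¹ = -(a*x + a*x⁻¹) := by rw [inv_neg]; ring
    rw [this, map_neg, hx.2]; decide
  · intro x hx
    simp only [Finset.mem_coe, mem_filter, mem_univ, true_and] at hx ⊢
    refine ⟨neg_ne_zero.mpr hx.1, ?_⟩
    have : a * -x + a * (-x)⁻¹ = -(a*x + a*x⁻¹) := by rw [inv_neg]; ring
    rw [this, map_neg, hx.2]; decide
  · intro x _; simp
  · intro x _; simp

end Count

section Count2
variable {F : Type} [Field F] [Fintype F] [DecidableEq F] [Algebra (ZMod 3) F]
local notation "tr" => Algebra.trace (ZMod 3) F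

-- core single-element split
lemma sum_ite_ne (x0 : F) (P : F → Prop) [DecidablePred P] :
    (∑ x : F, if x ≠ x0 ∧ P x then 1 else 0) + (if P x0 then 1 else 0)
      = ∑ x : F, if P x then 1 else 0 := by
  classical
  have h1 : (∑ x : F, if x ≠ x0 ∧ P x then 1 else 0)
      = ∑ x ∈ univ.erase x0, (if P x then 1 else 0) := by
    rw [← Finset.add_sum_erase (univ : Finset F) _ (mem_univ x0)]
    simp only [ne_eq, not_true_eq_false, false_and, if_false]
    rw [zero_add]
    apply Finset.sum_congr rfl
    intro x hx
    have hne : x ≠ x0 := (Finset.mem_erase.mp hx).1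
    simp [hne]
  rw [h1, add_comm]
  exact Finset.add_sum_erase (univ : Finset F) (fun x => if P x then (1:ℕ) else 0) (mem_univ x0)

lemma T_eq (a : F) (ha : a ≠ 0) :
    (univ.filter fun p : F × F => p.1 ≠ 0 ∧ tr (a*p.1*p.2^2 - a) ≠ 0).card
      = (univ.filter fun x : F => x ≠ 0).card
        * (univ.filter fun x : F => tr x ≠ 0).card := by
  classical
  set m' := (univ.filter fun x : F => x ≠ 0).card with hm'
  set Ntr := (univ.filter fun x : F => tr x ≠ 0).card with hNtr
  set d : ℕ := if tr (-a) ≠ 0 then 1 else 0 with hd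
  set g : F → ℕ := fun s => ∑ α : F, if α ≠ 0 ∧ tr (a*α*s^2 - a) ≠ 0 then 1 else 0 with hg
  have hcard : (univ.filter fun p : F × F => p.1 ≠ 0 ∧ tr (a*p.1*p.2^2 - a) ≠ 0).card
      = ∑ s : F, g s := by
    rw [Finset.card_filter, Fintype.sum_prod_type]
    rw [Finset.sum_comm]
  -- g 0 = m' * d
  have hg0 : g 0 = m' * d := by
    rw [hg]
    simp only
    have : ∀ α : F, (if α ≠ 0 ∧ tr (a*α*(0:F)^2 - a) ≠ 0 then (1:ℕ) else 0)
        = (if α ≠ 0 then 1 else 0) * d := by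
      intro α
      have he : a*α*(0:F)^2 - a = -a := by ring
      rw [he, hd]
      by_cases h1 : α ≠ 0 <;> by_cases h2 : tr (-a) ≠ 0 <;> simp [h1, h2]
    rw [Finset.sum_congr rfl (fun α _ => this α), ← Finset.sum_mul]
    congr 1
    rw [hm', Finset.card_filter]
  -- s ≠ 0 : g s + d = Ntr
  have hgs : ∀ s : F, s ≠ 0 → g s + d = Ntr := by
    intro s hs
    have hb : a * s^2 ≠ 0 := by
      apply mul_ne_zero ha (pow_ne_zero _ hs)
    have e1 : g s = ∑ β : F, if β ≠ 0 ∧ tr (β - a) ≠ 0 then 1 else 0 := by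
      rw [hg]
      simp only
      rw [← Equiv.sum_comp (Equiv.mulLeft₀ ((a*s^2)⁻¹) (inv_ne_zero hb))
        (fun α => if α ≠ 0 ∧ tr (a*α*s^2 - a) ≠ 0 then (1:ℕ) else 0)]
      apply Finset.sum_congr rfl
      intro β _
      have h1 : (Equiv.mulLeft₀ ((a*s^2)⁻¹) (inv_ne_zero hb)) β = (a*s^2)⁻¹ * β := rfl
      rw [h1]
      congr 1
      have h2 : a * ((a*s^2)⁻¹ * β) * s^2 = β := by field_simp
      rw [h2]
      have h3 : (a*s^2)⁻¹ * β ≠ 0 ↔ β ≠ 0 := by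
        constructor
        · intro h hb0; exact h (by rw [hb0, mul_zero])
        · intro h hb0
          apply h
          have := mul_eq_zero.mp hb0
          rcases this with h' | h'
          · exact absurd h' (inv_ne_zero hb)
          · exact h'
      rw [eq_iff_iff]
      exact and_congr h3 Iff.rfl
    have e2 : (∑ β : F, if β ≠ 0 ∧ tr (β - a) ≠ 0 then (1:ℕ) else 0)
        = ∑ γ : F, if γ ≠ -a ∧ tr γ ≠ 0 then 1 else 0 := by
      rw [← Equiv.sum_comp (Equiv.addRight a)
        (fun β => if β ≠ 0 ∧ tr (β - a) ≠ 0 then (1:ℕ) else 0)]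
      apply Finset.sum_congr rfl
      intro γ _
      have h1 : (Equiv.addRight a) γ = γ + a := rfl
      rw [h1]
      congr 1
      have h2 : γ + a - a = γ := by ring
      rw [h2, eq_iff_iff]
      constructor
      · rintro ⟨u, v⟩; exact ⟨fun hh => u (by rw [hh]; ring), v⟩
      · rintro ⟨u, v⟩; exact ⟨fun hh => u (by linear_combination hh), v⟩
    rw [e1, e2]
    have := sum_ite_ne (-a) (fun γ => tr γ ≠ 0)
    rw [this]
    rw [hNtr, Finset.card_filter]
  -- sum up
  have herase : (univ.erase (0:F)).card = m' := by
    rw [hm']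
    congr 1
    ext x; simp [Finset.mem_erase]
  have hsum : ∑ s : F, g s = g 0 + ∑ s ∈ univ.erase 0, g s :=
    (Finset.add_sum_erase (univ : Finset F) g (mem_univ 0)).symm
  have hsum2 : (∑ s ∈ univ.erase 0, g s) + m' * d = m' * Ntr := by
    have : ∀ s ∈ univ.erase (0:F), g s + d = Ntr := fun s hs =>
      hgs s (Finset.mem_erase.mp hs).1
    have h4 : ∑ s ∈ univ.erase 0, (g s + d) = (univ.erase (0:F)).card * Ntr := by
      rw [Finset.sum_congr rfl this, Finset.sum_const, smul_eq_mul]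
    rw [Finset.sum_add_distrib, Finset.sum_const, smul_eq_mul, herase] at h4
    rw [← herase] at h4 ⊢
    omega
  rw [hcard, hsum, hg0]
  omega

end Count2

section Count3
variable {F : Type} [Field F] [Fintype F] [DecidableEq F] [Algebra (ZMod 3) F]
local notation "tr" => Algebra.trace (ZMod 3) F

lemma P1_card (a : F) :
    (univ.filter fun p : F × F => p.1 ≠ 0 ∧ tr (a*(p.1+p.1⁻¹+1)) ≠ 0).card
      = (univ.filter fun α : F => α ≠ 0 ∧ tr (a*(α+α⁻¹+1)) ≠ 0).card * Fintype.card F := by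
  rw [Finset.card_filter, Fintype.sum_prod_type, Finset.card_filter, Finset.sum_mul]
  apply Finset.sum_congr rfl
  intro α _
  by_cases h : α ≠ 0 ∧ tr (a*(α+α⁻¹+1)) ≠ 0 <;>
    simp [h, Finset.sum_const, Finset.card_univ]

lemma P2_card (h3 : (3:F) = 0) (a : F) (ha : a ≠ 0) :
    (univ.filter fun p : F × F × F =>
        p.1 ≠ 0 ∧ tr (a * (p.2.1^2*p.1 + p.1⁻¹*p.2.2^2 - p.2.1*p.2.2 - 1)) ≠ 0).card
      = Fintype.card F * ((univ.filter fun x : F => x ≠ 0).card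
          * (univ.filter fun x : F => tr x ≠ 0).card) := by
  classical
  -- step 1: change the condition
  have hstep1 : (univ.filter fun p : F × F × F =>
        p.1 ≠ 0 ∧ tr (a * (p.2.1^2*p.1 + p.1⁻¹*p.2.2^2 - p.2.1*p.2.2 - 1)) ≠ 0)
      = (univ.filter fun p : F × F × F =>
        p.1 ≠ 0 ∧ tr (a * p.1 * (p.2.1 + p.2.2*p.1⁻¹)^2 - a) ≠ 0) := by
    apply Finset.filter_congr
    rintro ⟨α, f, h⟩ _
    simp only
    constructor
    · rintro ⟨h1, h2⟩
      refine ⟨h1, ?_⟩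
      have he : a * α * (f + h*α⁻¹)^2 - a
          = a * (f^2*α + α⁻¹*h^2 - f*h - 1) := by
        linear_combination (2*a*f*h + a*h^2*α⁻¹) * mul_inv_cancel₀ h1 + a*f*h*h3
      rw [he]; exact h2
    · rintro ⟨h1, h2⟩
      refine ⟨h1, ?_⟩
      have he : a * α * (f + h*α⁻¹)^2 - a
          = a * (f^2*α + α⁻¹*h^2 - f*h - 1) := by
        linear_combination (2*a*f*h + a*h^2*α⁻¹) * mul_inv_cancel₀ h1 + a*f*h*h3
      rw [← he]; exact h2
  rw [hstep1]
  -- step 2: bijection (α,f,h) → (α, f + h α⁻¹, h)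
  have hstep2 : (univ.filter fun p : F × F × F =>
        p.1 ≠ 0 ∧ tr (a * p.1 * (p.2.1 + p.2.2*p.1⁻¹)^2 - a) ≠ 0).card
      = (univ.filter fun p : F × F × F =>
        p.1 ≠ 0 ∧ tr (a * p.1 * p.2.1^2 - a) ≠ 0).card := by
    refine Finset.card_nbij' (fun p => (p.1, p.2.1 + p.2.2 * p.1⁻¹, p.2.2))
      (fun p => (p.1, p.2.1 - p.2.2 * p.1⁻¹, p.2.2)) ?_ ?_ ?_ ?_
    · rintro ⟨α, f, h⟩ hp
      simp only [Finset.mem_coe, mem_filter, mem_univ, true_and] at hp ⊢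
      exact hp
    · rintro ⟨α, s, h⟩ hp
      simp only [Finset.mem_coe, mem_filter, mem_univ, true_and] at hp ⊢
      refine ⟨hp.1, ?_⟩
      have : s - h * α⁻¹ + h * α⁻¹ = s := by ring
      rw [this]; exact hp.2
    · rintro ⟨α, f, h⟩ _
      show (α, f + h * α⁻¹ - h * α⁻¹, h) = (α, f, h)
      have he : f + h * α⁻¹ - h * α⁻¹ = f := by ring
      rw [he]
    · rintro ⟨α, s, h⟩ _
      show (α, s - h * α⁻¹ + h * α⁻¹, h) = (α, s, h)
      have he : s - h * α⁻¹ + h * α⁻¹ = s := by ring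
      rw [he]
  rw [hstep2]
  -- step 3: sum out h
  have hstep3 : (univ.filter fun p : F × F × F =>
        p.1 ≠ 0 ∧ tr (a * p.1 * p.2.1^2 - a) ≠ 0).card
      = (univ.filter fun p : F × F =>
          p.1 ≠ 0 ∧ tr (a * p.1 * p.2^2 - a) ≠ 0).card * Fintype.card F := by
    rw [Finset.card_filter, Finset.card_filter, Finset.sum_mul,
      Fintype.sum_prod_type, Fintype.sum_prod_type]
    apply Finset.sum_congr rfl
    intro α _
    rw [Fintype.sum_prod_type]
    apply Finset.sum_congr rfl
    intro s _
    by_cases h : α ≠ 0 ∧ tr (a * α * s^2 - a) ≠ 0 <;>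
      simp [h, Finset.sum_const, Finset.card_univ]
  rw [hstep3, T_eq a ha]
  ring

end Count3

section K
variable {F : Type} [Field F] [Fintype F] [DecidableEq F] [Algebra (ZMod 3) F]
local notation "tr" => Algebra.trace (ZMod 3) F

lemma kloos_eq (a : F) (ha : a ≠ 0) :
    kloos F (a^2)
      = ((univ.filter fun α : F => α ≠ 0 ∧ tr (a*α+a*α⁻¹) = 0).card : ℂ)
        + ((univ.filter fun α : F => α ≠ 0 ∧ tr (a*α+a*α⁻¹) = 1).card : ℂ) * omg
        + ((univ.filter fun α : F => α ≠ 0 ∧ tr (a*α+a*α⁻¹) = 2).card : ℂ) * omg^2 := by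
  classical
  have step1 : kloos F (a^2)
      = ∑ β ∈ univ.filter (fun β : F => β ≠ 0), canChar F (a*β + a*β⁻¹) := by
    rw [kloos]
    refine Finset.sum_nbij' (fun α => a⁻¹ * α) (fun β => a * β) ?_ ?_ ?_ ?_ ?_
    · intro α hα
      simp only [mem_filter, mem_univ, true_and] at hα ⊢
      exact mul_ne_zero (inv_ne_zero ha) hα
    · intro β hβ
      simp only [mem_filter, mem_univ, true_and] at hβ ⊢
      exact mul_ne_zero ha hβ
    · intro α _; field_simp
    · intro β _; field_simp
    · intro α hα
      simp only [mem_filter, mem_univ, true_and] at hα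
      congr 1
      field_simp
  rw [step1]
  have step2 := Finset.sum_fiberwise_of_maps_to
    (g := fun β : F => tr (a*β+a*β⁻¹)) (s := univ.filter (fun β : F => β ≠ 0))
    (t := (univ : Finset (ZMod 3))) (fun x _ => mem_univ _)
    (f := fun β => canChar F (a*β + a*β⁻¹))
  rw [← step2]
  have hinner : ∀ c : ZMod 3,
      (∑ β ∈ (univ.filter (fun β : F => β ≠ 0)).filter
          (fun β => tr (a*β+a*β⁻¹) = c), canChar F (a*β + a*β⁻¹))
      = ((univ.filter fun α : F => α ≠ 0 ∧ tr (a*α+a*α⁻¹) = c).card : ℂ) * omg ^ c.val := by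
    intro c
    rw [Finset.sum_congr rfl (fun β hβ => ?_), Finset.sum_const, nsmul_eq_mul,
      Finset.filter_filter]
    rw [canChar_eq]
    congr 2
    exact (Finset.mem_filter.mp hβ).2
  have huniv : (univ : Finset (ZMod 3)) = {0, 1, 2} := by decide
  rw [huniv, Finset.sum_insert (by decide), Finset.sum_insert (by decide),
    Finset.sum_singleton, hinner 0, hinner 1, hinner 2]
  norm_num [show ZMod.val (1 : ZMod 3) = 1 from rfl, show ZMod.val (2 : ZMod 3) = 2 from rfl]
  ring

end K


section Split
variable {F : Type} [Field F] [Fintype F] [DecidableEq F] [Algebra (ZMod 3) F]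

lemma SO_split (h3 : (3:F) = 0) (a : F) :
    (Finset.univ.filter
        (fun w : Matrix (Fin 3) (Fin 3) F =>
          (w.det ≠ 0 ∧ wᵀ * matJ F * w = matJ F ∧ w.det = 1) ∧
            Algebra.trace (ZMod 3) F (a * w.trace) ≠ 0)).card
      = (univ.filter fun p : F × F => p.1 ≠ 0 ∧
          Algebra.trace (ZMod 3) F (a*(p.1+p.1⁻¹+1)) ≠ 0).card
        + (univ.filter fun p : F × F × F => p.1 ≠ 0 ∧
            Algebra.trace (ZMod 3) F
              (a * (p.2.1^2*p.1 + p.1⁻¹*p.2.2^2 - p.2.1*p.2.2 - 1)) ≠ 0).card := by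
  classical
  set P1 : Finset (F × F) := univ.filter fun p : F × F => p.1 ≠ 0 ∧
      Algebra.trace (ZMod 3) F (a*(p.1+p.1⁻¹+1)) ≠ 0 with hP1def
  set P2 : Finset (F × F × F) := univ.filter fun p : F × F × F => p.1 ≠ 0 ∧
      Algebra.trace (ZMod 3) F
        (a * (p.2.1^2*p.1 + p.1⁻¹*p.2.2^2 - p.2.1*p.2.2 - 1)) ≠ 0 with hP2def
  have himage : (Finset.univ.filter
        (fun w : Matrix (Fin 3) (Fin 3) F =>
          (w.det ≠ 0 ∧ wᵀ * matJ F * w = matJ F ∧ w.det = 1) ∧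
            Algebra.trace (ZMod 3) F (a * w.trace) ≠ 0))
      = (P1.image fun p => pmat p.1 p.2) ∪ (P2.image fun p => bmat p.1 p.2.1 p.2.2) := by
    ext w
    simp only [mem_filter, mem_univ, true_and, mem_union, mem_image]
    constructor
    · rintro ⟨⟨-, hw, hd⟩, htr⟩
      rcases (charSO h3).mp ⟨hw, hd⟩ with ⟨α, f, hα, rfl⟩ | ⟨α, f, h, hα, rfl⟩
      · left
        refine ⟨(α, f), Finset.mem_filter.mpr ⟨mem_univ _, hα, ?_⟩, rfl⟩
        rwa [trace_pmat] at htr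
      · right
        refine ⟨(α, f, h), Finset.mem_filter.mpr ⟨mem_univ _, hα, ?_⟩, rfl⟩
        rwa [trace_bmat] at htr
    · rintro (⟨p, hp, rfl⟩ | ⟨p, hp, rfl⟩)
      · obtain ⟨-, hα, htr⟩ := Finset.mem_filter.mp hp
        obtain ⟨hw, hd⟩ := (charSO h3).mpr (Or.inl ⟨p.1, p.2, hα, rfl⟩)
        refine ⟨⟨by rw [hd]; exact one_ne_zero, hw, hd⟩, ?_⟩
        rwa [trace_pmat]
      · obtain ⟨-, hα, htr⟩ := Finset.mem_filter.mp hp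
        obtain ⟨hw, hd⟩ := (charSO h3).mpr (Or.inr ⟨p.1, p.2.1, p.2.2, hα, rfl⟩)
        refine ⟨⟨by rw [hd]; exact one_ne_zero, hw, hd⟩, ?_⟩
        rwa [trace_bmat]
  have hdisj : Disjoint (P1.image fun p => pmat p.1 p.2)
      (P2.image fun p => bmat p.1 p.2.1 p.2.2) := by
    rw [Finset.disjoint_left]
    rintro w hw1 hw2
    obtain ⟨p, hp, rfl⟩ := Finset.mem_image.mp hw1
    obtain ⟨q, hq, he⟩ := Finset.mem_image.mp hw2
    obtain ⟨-, hq1, -⟩ := Finset.mem_filter.mp hq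
    have h10 := congrFun (congrFun he 1) 0
    simp [pmat, bmat] at h10
    exact hq1 h10
  have hinj1 : Set.InjOn (fun p : F × F => pmat p.1 p.2) P1 := by
    rintro ⟨α, f⟩ _ ⟨β, g⟩ _ he
    simp only at he
    have h00 := congrFun (congrFun he 0) 0
    have h21 := congrFun (congrFun he 2) 1
    simp [pmat] at h00 h21
    simp [Prod.ext_iff, h00, h21]
  have hinj2 : Set.InjOn (fun p : F × F × F => bmat p.1 p.2.1 p.2.2) P2 := by
    rintro ⟨α, f, h⟩ hp ⟨β, g, k⟩ hq he
    obtain ⟨-, hα0, -⟩ := Finset.mem_filter.mp hp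
    obtain ⟨-, hβ0, -⟩ := Finset.mem_filter.mp hq
    have hα : α ≠ 0 := hα0
    have hβ : β ≠ 0 := hβ0
    simp only at he
    have h10 := congrFun (congrFun he 1) 0
    simp [bmat] at h10
    have hab : α = β := by
      first
      | exact h10
      | exact inv_injective h10
    subst hab
    have h20 := congrFun (congrFun he 2) 0
    simp [bmat] at h20
    have h12 := congrFun (congrFun he 1) 2
    simp [bmat] at h12
    have hhk : h = k := by
      first
      | exact h12
      | exact mul_left_cancel₀ (inv_ne_zero hα) h12
      | exact h12.resolve_right (fun hh => absurd hh (inv_ne_zero hα))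
      | exact h12.resolve_right hα
      | { rcases h12 with h12 | h12
          · exact h12
          · exact absurd h12 (inv_ne_zero hα) }
    simp [Prod.ext_iff, h20, hhk]
  rw [himage, Finset.card_union_of_disjoint hdisj,
    Finset.card_image_of_injOn hinj1, Finset.card_image_of_injOn hinj2]

end Split


/-- The Hamming weight of the codeword `c₁(a) = (tr(a·Tr g))_{g ∈ SO(3,q)}` equals
`(2q/3)·(q² - 1 - Re(λ(a))·K(λ;a²))`, where q = 3^r. -/
theorem weight_SO3_codeword (r : ℕ) (hr : 0 < r) (F : Type) [Field F] [Fintype F]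
    [DecidableEq F] [Algebra (ZMod 3) F] (hF : Fintype.card F = 3 ^ r)
    (a : F) (ha : a ≠ 0) :
    ((Finset.univ.filter
        (fun w : Matrix (Fin 3) (Fin 3) F =>
          (w.det ≠ 0 ∧ wᵀ * matJ F * w = matJ F ∧ w.det = 1) ∧
            Algebra.trace (ZMod 3) F (a * w.trace) ≠ 0)).card : ℂ)
      = (2 * (3 ^ r : ℂ) / 3) *
          ((3 ^ r : ℂ) ^ 2 - 1 - ((canChar F a).re : ℂ) * kloos F (a ^ 2)) := by
  classical
  have h3 : (3:F) = 0 := by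
    rw [show ((3:F)) = algebraMap (ZMod 3) F 3 from (map_ofNat (algebraMap (ZMod 3) F) 3).symm,
      show (3 : ZMod 3) = 0 by decide, map_zero]
  -- notation
  set A : ℕ := (univ.filter fun α : F => α ≠ 0 ∧
      Algebra.trace (ZMod 3) F (a*(α+α⁻¹+1)) ≠ 0).card with hAdef
  set n0 : ℕ := (univ.filter fun α : F => α ≠ 0 ∧
      Algebra.trace (ZMod 3) F (a*α+a*α⁻¹) = 0).card with hn0def
  set n1 : ℕ := (univ.filter fun α : F => α ≠ 0 ∧
      Algebra.trace (ZMod 3) F (a*α+a*α⁻¹) = 1).card with hn1def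
  set n2 : ℕ := (univ.filter fun α : F => α ≠ 0 ∧
      Algebra.trace (ZMod 3) F (a*α+a*α⁻¹) = 2).card with hn2def
  set m' : ℕ := (univ.filter fun x : F => x ≠ 0).card with hm'def
  set Ntr : ℕ := (univ.filter fun x : F => Algebra.trace (ZMod 3) F x ≠ 0).card with hNtrdef
  set f0 : ℕ := (univ.filter fun x : F => Algebra.trace (ZMod 3) F x = 0).card with hf0def
  -- counting identities
  have hsplit := SO_split (F := F) h3 a
  rw [P1_card a, P2_card h3 a ha] at hsplit
  have hN1 : m' + 1 = Fintype.card F := filter_ne_zero_card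
  have hN3 : n0 + n1 + n2 = m' := n_partition a
  have hN4 : n1 = n2 := n_one_eq_two a
  have hN5 : f0 + Ntr = Fintype.card F := by
    have := Finset.card_filter_add_card_filter_not
      (s := (univ : Finset F)) (p := fun x => Algebra.trace (ZMod 3) F x = 0)
    rw [← Finset.card_univ]
    convert this using 2
  have hN6 : 3 * f0 = Fintype.card F := three_mul_fiber F
  -- complex versions
  have hq : ((Fintype.card F : ℕ) : ℂ) = (3:ℂ) ^ r := by rw [hF]; push_cast; ring
  have hQ3 : (3:ℂ) ^ r = 3 * (f0 : ℂ) := by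
    rw [← hq, ← hN6]; push_cast; ring
  have hm'C : (m' : ℂ) = 3 * (f0 : ℂ) - 1 := by
    have h1 : ((m' + 1 : ℕ) : ℂ) = 3 * (f0 : ℂ) := by rw [hN1, ← hN6]; push_cast; ring
    push_cast at h1
    linear_combination h1
  have hNtrC : (Ntr : ℂ) = 2 * (f0 : ℂ) := by
    have h1 : ((f0 + Ntr : ℕ) : ℂ) = 3 * (f0 : ℂ) := by rw [hN5, ← hN6]; push_cast; ring
    push_cast at h1
    linear_combination h1
  have hW : (((Finset.univ.filter
        (fun w : Matrix (Fin 3) (Fin 3) F =>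
          (w.det ≠ 0 ∧ wᵀ * matJ F * w = matJ F ∧ w.det = 1) ∧
            Algebra.trace (ZMod 3) F (a * w.trace) ≠ 0)).card : ℕ) : ℂ)
      = (A : ℂ) * (3:ℂ)^r + (3:ℂ)^r * ((m' : ℂ) * (Ntr : ℂ)) := by
    rw [hsplit]
    push_cast
    rw [hq]
  have hK := kloos_eq a ha
  have hrel : (n0 : ℂ) + 2 * (n2 : ℂ) + 1 = 3 * (f0 : ℂ) := by
    have h1 : ((n0 + n1 + n2 + 1 : ℕ) : ℂ) = 3 * (f0 : ℂ) := by
      rw [hN3, hN1, ← hN6]; push_cast; ring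
    have h4 : (n1 : ℂ) = (n2 : ℂ) := by rw [hN4]
    push_cast at h1
    linear_combination h1 - h4
  have hKval : kloos F (a^2) = (n0 : ℂ) - (n2 : ℂ) := by
    rw [hK, ← hn0def, ← hn1def, ← hn2def]
    have h4 : (n1 : ℂ) = (n2 : ℂ) := by rw [hN4]
    linear_combination h4 * omg + (n2 : ℂ) * omg_sum
  -- case analysis on tr a
  have hcse : ∀ c : ZMod 3, c = 0 ∨ c = 1 ∨ c = 2 := by decide
  have hchar : canChar F a = omg ^ (Algebra.trace (ZMod 3) F a).val := canChar_eq F a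
  rw [hW, hKval]
  rcases hcse (Algebra.trace (ZMod 3) F a) with ht | ht | ht
  · -- tr a = 0
    have hA2 : A + n0 = m' := by
      have := A_add_n (F := F) a
      rw [ht] at this
      rw [show (-(0 : ZMod 3)) = 0 by decide] at this
      exact this
    have hAC : (A : ℂ) = (m' : ℂ) - (n0 : ℂ) := by
      have h1 : ((A + n0 : ℕ) : ℂ) = (m' : ℂ) := by rw [hA2]
      push_cast at h1; linear_combination h1
    have hre : ((canChar F a).re : ℂ) = 1 := by
      rw [hchar, ht]
      norm_num [show ZMod.val (0 : ZMod 3) = 0 from rfl]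
    rw [hre, hAC, hm'C, hNtrC, hQ3]
    linear_combination (-(f0 : ℂ)) * hrel
  · -- tr a = 1
    have hA2 : A + n2 = m' := by
      have := A_add_n (F := F) a
      rw [ht] at this
      rw [show (-(1 : ZMod 3)) = 2 by decide] at this
      exact this
    have hAC : (A : ℂ) = (m' : ℂ) - (n2 : ℂ) := by
      have h1 : ((A + n2 : ℕ) : ℂ) = (m' : ℂ) := by rw [hA2]
      push_cast at h1; linear_combination h1
    have hre : ((canChar F a).re : ℂ) = -(1/2) := by
      rw [hchar, ht, show ZMod.val (1 : ZMod 3) = 1 from rfl, pow_one]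
      exact omg_re
    rw [hre, hAC, hm'C, hNtrC, hQ3]
    linear_combination (-(f0 : ℂ)) * hrel
  · -- tr a = 2
    have hA2 : A + n1 = m' := by
      have := A_add_n (F := F) a
      rw [ht] at this
      rw [show (-(2 : ZMod 3)) = 1 by decide] at this
      exact this
    have hAC : (A : ℂ) = (m' : ℂ) - (n2 : ℂ) := by
      have h1 : ((A + n2 : ℕ) : ℂ) = (m' : ℂ) := by
        rw [← hN4, hA2]
      push_cast at h1; linear_combination h1
    have hre : ((canChar F a).re : ℂ) = -(1/2) := by
      rw [hchar, ht, show ZMod.val (2 : ZMod 3) = 2 from rfl]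
      exact omg_sq_re
    rw [hre, hAC, hm'C, hNtrC, hQ3]
    linear_combination (-(f0 : ℂ)) * hrel
end
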